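/- arXiv:2410.02889 — 3 statements merged into one kernel-verified Lean document; each statement's English description precedes it below -/
import Mathlib

section
/- Let 0<α<n and let 𝒟 be a dyadic grid in ℝ^n. For all nonnegative measurable functions f,g on ℝ^n and every x∈ℝ^n, the dyadic bilinear fractional integral satisfies BI^𝒟_α(f,g)(x) ≤ Σ_{Q∈𝒟}|Q|^{α/n−1}[(f·1_{3Q})∗(g·1_{3Q})](2x)·1_Q(x), where (F∗G)(w)=∫_{ℝ^n}F(w−z)G(z)dz denotes convolution. -/
open MeasureTheory ENNReal Set Filter

noncomputable section

abbrev Euc (n : ℕ) := EuclideanSpace ℝ (Fin n)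

/-- An axis-parallel half-open cube in `ℝⁿ`: a translate of `[0, ℓ)ⁿ`. -/
structure Cube (n : ℕ) where
  corner : Fin n → ℝ
  side : ℝ
  side_pos : 0 < side

namespace Cube

/-- The underlying set of a cube. -/
def set {n : ℕ} (Q : Cube n) : Set (Euc n) :=
  {x | ∀ i, Q.corner i ≤ x i ∧ x i < Q.corner i + Q.side}

/-- The volume `|Q| = ℓ(Q)^n`. -/
def vol {n : ℕ} (Q : Cube n) : ℝ := Q.side ^ n

/-- The concentric dilate `3Q`. -/
def three {n : ℕ} (Q : Cube n) : Cube n :=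
  ⟨fun i => Q.corner i - Q.side, 3 * Q.side, by have := Q.side_pos; linarith⟩

end Cube

/-- A weight: a nonnegative locally integrable function. -/
def IsWeight {n : ℕ} (v : Euc n → ℝ) : Prop :=
  (∀ x, 0 ≤ v x) ∧ LocallyIntegrable v

/-- Weighted `L^p` (quasi)norm `(∫ |f|^p v)^{1/p}`, valued in `ℝ≥0∞`. -/
def wNorm {n : ℕ} (p : ℝ) (v f : Euc n → ℝ) : ℝ≥0∞ :=
  (∫⁻ x, ENNReal.ofReal (|f x| ^ p * v x)) ^ (1 / p)

/-- Weighted `L^p` norm of an `ℝ≥0∞`-valued function. -/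
def wNormE {n : ℕ} (p : ℝ) (v : Euc n → ℝ) (F : Euc n → ℝ≥0∞) : ℝ≥0∞ :=
  (∫⁻ x, F x ^ p * ENNReal.ofReal (v x)) ^ (1 / p)

/-- The bilinear fractional integral operator `BI_α`. -/
def BI (n : ℕ) (α : ℝ) (f g : Euc n → ℝ) (x : Euc n) : ℝ :=
  ∫ y, f (x - y) * g (x + y) / ‖y‖ ^ ((n : ℝ) - α)

/-- The bilinear fractional integral operator, `ℝ≥0∞`-valued version for
nonnegative functions. -/
def BIpos (n : ℕ) (α : ℝ) (f g : Euc n → ℝ) (x : Euc n) : ℝ≥0∞ :=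
  ∫⁻ y, ENNReal.ofReal (f (x - y)) * ENNReal.ofReal (g (x + y)) /
    ENNReal.ofReal (‖y‖ ^ ((n : ℝ) - α))

/-- The bilinear fractional maximal operator `BM_α`. -/
def BM (n : ℕ) (α : ℝ) (f g : Euc n → ℝ) (x : Euc n) : ℝ≥0∞ :=
  ⨆ (Q : Cube n) (_ : x ∈ Q.set),
    ENNReal.ofReal (Q.vol ^ (α / (n : ℝ) - 1)) *
      ∫⁻ y in {y : Euc n | ∀ i, |y i| ≤ Q.side}, ENNReal.ofReal |f (x - y) * g (x + y)|

/-- The bi-sublinear fractional maximal operator `M^{r,s}_α`. -/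
def Mrs (n : ℕ) (α r s : ℝ) (f g : Euc n → ℝ) (x : Euc n) : ℝ≥0∞ :=
  ⨆ (Q : Cube n) (_ : x ∈ Q.set),
    ENNReal.ofReal (Q.vol ^ (α / (n : ℝ))) *
      ((∫⁻ y in Q.set, ENNReal.ofReal (|f y| ^ r)) / ENNReal.ofReal Q.vol) ^ (1 / r) *
      ((∫⁻ y in Q.set, ENNReal.ofReal (|g y| ^ s)) / ENNReal.ofReal Q.vol) ^ (1 / s)

/-- `M^{r,s}_α` restricted to a family of cubes `𝒟`. -/
def MrsD (n : ℕ) (α r s : ℝ) (𝒟 : Set (Cube n)) (f g : Euc n → ℝ) (x : Euc n) : ℝ≥0∞ :=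
  ⨆ (Q : Cube n) (_ : Q ∈ 𝒟) (_ : x ∈ Q.set),
    ENNReal.ofReal (Q.vol ^ (α / (n : ℝ))) *
      ((∫⁻ y in Q.set, ENNReal.ofReal (|f y| ^ r)) / ENNReal.ofReal Q.vol) ^ (1 / r) *
      ((∫⁻ y in Q.set, ENNReal.ofReal (|g y| ^ s)) / ENNReal.ofReal Q.vol) ^ (1 / s)

/-- Conjugate exponent `r' = r/(r-1)`. -/
def conjExp (r : ℝ) : ℝ := r / (r - 1)

/-- A Young function: convex, continuous, strictly increasing on `[0,∞)`,
vanishing at `0`, and superlinear at infinity. -/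
structure IsYoung (Φ : ℝ → ℝ) : Prop where
  convexOn : ConvexOn ℝ (Ici 0) Φ
  continuousOn : ContinuousOn Φ (Ici 0)
  strictMonoOn : StrictMonoOn Φ (Ici 0)
  map_zero : Φ 0 = 0
  tendsto_div_atTop : Tendsto (fun t => Φ t / t) atTop atTop

/-- The `B_p` integrability condition for a Young function. -/
def BCond (p : ℝ) (Φ : ℝ → ℝ) : Prop :=
  ∃ c > (0 : ℝ), IntegrableOn (fun t => Φ t / t ^ (p + 1)) (Ioi c)

/-- The `B_{p,q}` integrability condition for a Young function. -/
def BCond2 (p q : ℝ) (Φ : ℝ → ℝ) : Prop :=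
  ∃ c > (0 : ℝ), IntegrableOn (fun t => Φ t ^ (q / p) / t ^ (q + 1)) (Ioi c)

/-- `g` is the inverse of `f` on `[0,∞)`. -/
def InvPairOn (f g : ℝ → ℝ) : Prop :=
  (∀ t ∈ Ici (0 : ℝ), g (f t) = t) ∧ (∀ t ∈ Ici (0 : ℝ), f (g t) = t)

/-- The class `𝒴_{1/a, B}`: Young functions `φ` such that `t ↦ t^a / φ⁻¹(t)`
is the inverse of a Young function satisfying the condition `B`. -/
def YClass (a : ℝ) (B : (ℝ → ℝ) → Prop) (φ : ℝ → ℝ) : Prop :=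
  IsYoung φ ∧ ∃ φinv ψ ψinv : ℝ → ℝ, InvPairOn φ φinv ∧ InvPairOn ψ ψinv ∧
    IsYoung ψ ∧ B ψ ∧ ∀ t ∈ Ici (0 : ℝ), ψinv t = t ^ a / φinv t

/-- The class `𝒴^k_{1/a, B}`: Young functions `φ` such that
`t ↦ t^a / (φ⁻¹(t) · log(1+t)^k)` is the inverse of a Young function
satisfying the condition `B`. -/
def YClassLog (a : ℝ) (k : ℕ) (B : (ℝ → ℝ) → Prop) (φ : ℝ → ℝ) : Prop :=
  IsYoung φ ∧ ∃ φinv ψ ψinv : ℝ → ℝ, InvPairOn φ φinv ∧ InvPairOn ψ ψinv ∧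
    IsYoung ψ ∧ B ψ ∧
    ∀ t ∈ Ici (0 : ℝ), ψinv t = t ^ a / (φinv t * Real.log (1 + t) ^ k)

/-- The Orlicz average `‖f‖_{Φ,Q}` of `f` over the cube `Q`. -/
def orliczAvg {n : ℕ} (Φ : ℝ → ℝ) (Q : Cube n) (f : Euc n → ℝ) : ℝ :=
  sInf {lam : ℝ | 0 < lam ∧ (∫ x in Q.set, Φ (|f x| / lam)) / Q.vol ≤ 1}

/-- The normalized `L^r` average `‖f‖_{L^r,Q}` over a cube. -/
def lrAvg {n : ℕ} (r : ℝ) (Q : Cube n) (f : Euc n → ℝ) : ℝ :=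
  ((∫ x in Q.set, |f x| ^ r) / Q.vol) ^ (1 / r)

/-- The bilinear `A_{[ρ₁,ρ₂],σ}` condition for a pair of weights. -/
def APair {n : ℕ} (ρ₁ ρ₂ σ : ℝ) (w₁ w₂ : Euc n → ℝ) : Prop :=
  ∃ C : ℝ, ∀ Q : Cube n,
    ((∫ x in Q.set, (w₁ x * w₂ x) ^ σ) / Q.vol) ^ (1 / σ) *
      ((∫ x in Q.set, w₁ x ^ (-conjExp ρ₁)) / Q.vol) ^ (1 / conjExp ρ₁) *
      ((∫ x in Q.set, w₂ x ^ (-conjExp ρ₂)) / Q.vol) ^ (1 / conjExp ρ₂) ≤ C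

/-- The Muckenhoupt `A_ρ` condition. -/
def MuckAp (n : ℕ) (ρ : ℝ) (w : Euc n → ℝ) : Prop :=
  ∃ C : ℝ, ∀ Q : Cube n,
    ((∫ x in Q.set, w x) / Q.vol) *
      ((∫ x in Q.set, w x ^ (-(1 / (ρ - 1)))) / Q.vol) ^ (ρ - 1) ≤ C

/-- The `BMO` seminorm, valued in `ℝ≥0∞`. -/
def bmoNorm (n : ℕ) (b : Euc n → ℝ) : ℝ≥0∞ :=
  ⨆ Q : Cube n,
    (∫⁻ x in Q.set, ENNReal.ofReal |b x - (∫ y in Q.set, b y) / Q.vol|) /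
      ENNReal.ofReal Q.vol

/-- A dyadic grid: a countable collection of cubes of dyadic side lengths such
that the cubes of a fixed side length partition `ℝⁿ` and any two cubes are
either disjoint or nested. -/
def IsDyadicGrid {n : ℕ} (𝒟 : Set (Cube n)) : Prop :=
  𝒟.Countable ∧
  (∀ Q ∈ 𝒟, ∃ k : ℤ, Q.side = (2 : ℝ) ^ k) ∧
  (∀ k : ℤ, ∀ x : Euc n, ∃! Q : Cube n, Q ∈ 𝒟 ∧ Q.side = (2 : ℝ) ^ k ∧ x ∈ Q.set) ∧
  ∀ Q ∈ 𝒟, ∀ P ∈ 𝒟, Q.set ∩ P.set = ∅ ∨ Q.set ⊆ P.set ∨ P.set ⊆ Q.set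

/-- A sparse family of cubes. -/
def IsSparse {n : ℕ} (𝒮 : Set (Cube n)) : Prop :=
  ∃ E : Cube n → Set (Euc n),
    (∀ Q ∈ 𝒮, E Q ⊆ Q.set ∧ ENNReal.ofReal Q.vol ≤ 2 * volume (E Q)) ∧
    𝒮.Pairwise fun Q P => Disjoint (E Q) (E P)

/-- The iterated commutator `[b⃗, BI_α]_{β⃗}`, where the value `0 : Fin 2`
denotes a first-component commutator and `1 : Fin 2` a second-component one;
`b (Fin.last N)` is the outermost commutator. -/
def iterComm (n : ℕ) (α : ℝ) : (N : ℕ) → (Fin N → Euc n → ℝ) → (Fin N → Fin 2) →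
    (Euc n → ℝ) → (Euc n → ℝ) → Euc n → ℝ
  | 0, _, _, f, g => BI n α f g
  | N + 1, b, β, f, g => fun x =>
      b (Fin.last N) x *
          iterComm n α N (fun i => b i.castSucc) (fun i => β i.castSucc) f g x -
        (if β (Fin.last N) = 0 then
          iterComm n α N (fun i => b i.castSucc) (fun i => β i.castSucc)
            (fun y => b (Fin.last N) y * f y) g x
        else
          iterComm n α N (fun i => b i.castSucc) (fun i => β i.castSucc) f
            (fun y => b (Fin.last N) y * g y) x)

/-- The shifted dyadic grid `𝒟^t`. -/
def shiftedGrid (n : ℕ) (t : Fin n → ℝ) : Set (Cube n) :=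
  {Q | ∃ (k : ℤ) (m : Fin n → ℤ),
    Q.side = (2 : ℝ) ^ (-k) ∧
    ∀ i, Q.corner i = (2 : ℝ) ^ (-k) * ((m i : ℝ) + (-1 : ℝ) ^ k * t i)}

/-- The weight factor in the two-weight characterization for `M^{r,s}_α`,
with the convention for the endpoint `ρ = r`. -/
def vFactor {n : ℕ} (r ρ : ℝ) (Q : Cube n) (v : Euc n → ℝ) : ℝ :=
  if r < ρ then ((∫ x in Q.set, v x ^ (-(r / (ρ - r)))) / Q.vol) ^ ((ρ - r) / (r * ρ))
  else (essInf v (volume.restrict Q.set))⁻¹ ^ (1 / ρ)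


theorem stmt15 {n : ℕ} (hn : 0 < n) {α : ℝ} (hα : 0 < α) (hαn : α < n)
    (𝒟 : Set (Cube n)) (h𝒟 : IsDyadicGrid 𝒟)
    (f g : Euc n → ℝ) (hf : Measurable f) (hg : Measurable g)
    (hf0 : ∀ x, 0 ≤ f x) (hg0 : ∀ x, 0 ≤ g x) (x : Euc n) :
    (∑' Q : 𝒟, ENNReal.ofReal (Q.1.vol ^ (α / (n : ℝ) - 1)) *
        (∫⁻ y in {y : Euc n | ∀ i, |y i| ≤ Q.1.side},
          ENNReal.ofReal (f (x - y)) * ENNReal.ofReal (g (x + y))) *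
        Q.1.set.indicator (fun _ => (1 : ℝ≥0∞)) x) ≤
    ∑' Q : 𝒟, ENNReal.ofReal (Q.1.vol ^ (α / (n : ℝ) - 1)) *
        (∫⁻ z, Q.1.three.set.indicator (fun y => ENNReal.ofReal (f y)) ((2 : ℝ) • x - z) *
          Q.1.three.set.indicator (fun y => ENNReal.ofReal (g y)) z) *
        Q.1.set.indicator (fun _ => (1 : ℝ≥0∞)) x := by
  refine ENNReal.tsum_le_tsum fun ⟨Q, hQ⟩ => ?_
  by_cases hx : x ∈ Q.set
  · refine mul_le_mul_left (mul_le_mul_right ?_ _) _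
    have hS : MeasurableSet {y : Euc n | ∀ i, |y i| ≤ Q.side} := by
      have : {y : Euc n | ∀ i, |y i| ≤ Q.side} =
          ⋂ i, {y : Euc n | |y i| ≤ Q.side} := by ext y; simp
      rw [this]
      exact MeasurableSet.iInter fun i =>
        measurableSet_le ((measurable_pi_apply i).comp
          (MeasurableEquiv.toLp 2 (Fin n → ℝ)).symm.measurable).abs measurable_const
    have key : (∫⁻ z, Q.three.set.indicator (fun y => ENNReal.ofReal (f y)) ((2 : ℝ) • x - z) *
          Q.three.set.indicator (fun y => ENNReal.ofReal (g y)) z) =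
        ∫⁻ y, Q.three.set.indicator (fun y => ENNReal.ofReal (f y)) (x - y) *
          Q.three.set.indicator (fun y => ENNReal.ofReal (g y)) (x + y) := by
      rw [← lintegral_add_left_eq_self (fun z =>
        Q.three.set.indicator (fun y => ENNReal.ofReal (f y)) ((2 : ℝ) • x - z) *
          Q.three.set.indicator (fun y => ENNReal.ofReal (g y)) z) x]
      congr 1
      ext y
      congr 2
      rw [two_smul]
      abel
    rw [key]
    calc (∫⁻ y in {y : Euc n | ∀ i, |y i| ≤ Q.side},
            ENNReal.ofReal (f (x - y)) * ENNReal.ofReal (g (x + y)))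
        ≤ ∫⁻ y in {y : Euc n | ∀ i, |y i| ≤ Q.side},
            Q.three.set.indicator (fun y => ENNReal.ofReal (f y)) (x - y) *
              Q.three.set.indicator (fun y => ENNReal.ofReal (g y)) (x + y) := by
          refine lintegral_mono_ae ((ae_restrict_iff' hS).2 (Filter.Eventually.of_forall
            fun y hy => ?_))
          have hmem : ∀ s : ℝ, |s| ≤ 1 → x + s • y ∈ Q.three.set := by
            intro s hs i
            have h1 := (hx i).1
            have h2 := (hx i).2
            have h3 := hy i
            have hsy : |s * y i| ≤ Q.side := by
              rw [abs_mul]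
              calc |s| * |y i| ≤ 1 * Q.side :=
                mul_le_mul hs (hy i) (abs_nonneg _) zero_le_one
              _ = Q.side := one_mul _
            have h4 := abs_le.mp hsy
            simp only [Cube.three, Cube.set, Set.mem_setOf_eq, PiLp.add_apply,
              PiLp.smul_apply, smul_eq_mul]
            constructor <;> nlinarith [h4.1, h4.2]
            
          have hm1 : x - y ∈ Q.three.set := by
            have := hmem (-1) (by norm_num)
            simpa [sub_eq_add_neg, neg_one_smul] using this
          have hm2 : x + y ∈ Q.three.set := by
            have := hmem 1 (by norm_num)
            simpa using this
          rw [Set.indicator_of_mem hm1, Set.indicator_of_mem hm2]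
      _ ≤ _ := setLIntegral_le_lintegral _ _
  · simp [Set.indicator_of_notMem hx]

end
end

section
/- Let 𝒟 be a dyadic grid in ℝ^n, let p_1,p_2>1 and 1<m_1≤p_1, 1<m_2≤p_2, and let f,g be nonnegative, bounded, compactly supported functions on ℝ^n. For each k∈ℤ, let {Q_{k,j}}_j be the collection of cubes of 𝒟 that are maximal with respect to the property ‖f‖_{L^{p_1/m_1},Q}·‖g‖_{L^{p_2/m_2},Q} > 2^{k(n+1)(m_1/p_1+m_2/p_2)}. Then for every k and j, |Q_{k,j} ∩ ⋃_i Q_{k+1,i}| ≤ |Q_{k,j}|/2; consequently, setting E_{k,j}=Q_{k,j}∖⋃_i Q_{k+1,i}, the sets {E_{k,j}}_{k,j} are pairwise disjoint, |Q_{k,j}|≤2|E_{k,j}|, and the family {Q_{k,j}}_{k,j} is sparse. -/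
open MeasureTheory ENNReal Set Filter

noncomputable section

lemma auxVolPos {n : ℕ} (Q : Cube n) : 0 < Q.vol := pow_pos Q.side_pos n


lemma auxSetEq {n : ℕ} (Q : Cube n) : Q.set =
    (MeasurableEquiv.toLp 2 (Fin n → ℝ)).symm ⁻¹'
      (Set.univ.pi fun i => Ico (Q.corner i) (Q.corner i + Q.side)) := by
  ext x
  simp [Cube.set, MeasurableEquiv.coe_toLp_symm, Set.mem_pi, Ico]

lemma auxMeas {n : ℕ} (Q : Cube n) : MeasurableSet Q.set := by
  rw [auxSetEq]
  exact (MeasurableEquiv.measurable _) (MeasurableSet.univ_pi fun i => measurableSet_Ico)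

lemma auxVolume {n : ℕ} (Q : Cube n) : volume Q.set = ENNReal.ofReal Q.vol := by
  rw [auxSetEq]
  rw [(EuclideanSpace.volume_preserving_symm_measurableEquiv_toLp (Fin n)).measure_preimage
    ((MeasurableSet.univ_pi fun i => measurableSet_Ico).nullMeasurableSet)]
  rw [volume_pi, Measure.pi_pi]
  simp [Real.volume_Ico, Cube.vol, ENNReal.ofReal_pow Q.side_pos.le]

lemma auxCornerMem {n : ℕ} (Q : Cube n) : ((WithLp.equiv 2 _).symm Q.corner) ∈ Q.set :=
  fun i => ⟨le_refl _, by simpa using Q.side_pos⟩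

lemma auxNonempty {n : ℕ} (Q : Cube n) : Q.set.Nonempty := ⟨_, auxCornerMem Q⟩

lemma auxSideMono {n : ℕ} (hn : 0 < n) {Q P : Cube n} (h : Q.set ⊆ P.set) :
    Q.side ≤ P.side := by
  by_contra hc
  push_neg at hc
  set i : Fin n := ⟨0, hn⟩
  set w : Euc n := (WithLp.equiv 2 _).symm
    (Function.update Q.corner i (max (Q.corner i) (P.corner i + P.side)))
  have hw : w ∈ Q.set := by
    intro j
    by_cases hj : j = i
    · rw [hj]
      have h1 : w i = max (Q.corner i) (P.corner i + P.side) := by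
        simp [w, Function.update_self]
      constructor
      · rw [h1]; exact le_max_left _ _
      · rw [h1]
        have hq := (h (auxCornerMem Q) i).1
        simp only [WithLp.equiv_symm_apply, WithLp.ofLp_toLp] at hq
        apply max_lt
        · linarith [Q.side_pos]
        · linarith
    · have h1 : w j = Q.corner j := by simp [w, Function.update_of_ne hj]
      rw [h1]
      exact ⟨le_refl _, by linarith [Q.side_pos]⟩
  have := (h hw i).2
  have h1 : w i = max (Q.corner i) (P.corner i + P.side) := by
    simp [w, Function.update_self]
  rw [h1] at this
  have := le_max_right (Q.corner i) (P.corner i + P.side)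
  linarith

lemma auxNested {n : ℕ} {𝒟 : Set (Cube n)} (h𝒟 : IsDyadicGrid 𝒟) {Q P : Cube n}
    (hQ : Q ∈ 𝒟) (hP : P ∈ 𝒟) (hx : (Q.set ∩ P.set).Nonempty) :
    Q.set ⊆ P.set ∨ P.set ⊆ Q.set := by
  rcases h𝒟.2.2.2 Q hQ P hP with h | h | h
  · rw [h] at hx; exact absurd hx (by simp)
  · exact Or.inl h
  · exact Or.inr h

lemma auxUniqueScale {n : ℕ} {𝒟 : Set (Cube n)} (h𝒟 : IsDyadicGrid 𝒟) {Q P : Cube n}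
    (hQ : Q ∈ 𝒟) (hP : P ∈ 𝒟) (hs : Q.side = P.side) {x : Euc n}
    (hxQ : x ∈ Q.set) (hxP : x ∈ P.set) : Q = P := by
  obtain ⟨k, hk⟩ := h𝒟.2.1 Q hQ
  obtain ⟨R, _, hRu⟩ := h𝒟.2.2.1 k x
  rw [hRu Q ⟨hQ, hk, hxQ⟩, hRu P ⟨hP, hs ▸ hk, hxP⟩]

/-- Integrability of `|f|^r` on a finite-measure set, for bounded measurable `f`. -/
lemma auxIntOn' {n : ℕ} {f : Euc n → ℝ} (hf : Measurable f) {C : ℝ} (hC : ∀ x, |f x| ≤ C)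
    {r : ℝ} (hr : 0 < r) {s : Set (Euc n)} (hs : volume s ≠ ⊤) (hsm : MeasurableSet s) :
    IntegrableOn (fun x => |f x| ^ r) s := by
  apply Measure.integrableOn_of_bounded (s := s) (μ := volume) hs
    ((hf.abs.pow_const r).aestronglyMeasurable) (M := |C| ^ r)
  filter_upwards with x
  rw [Real.norm_eq_abs, abs_of_nonneg (Real.rpow_nonneg (abs_nonneg _) r)]
  exact Real.rpow_le_rpow (abs_nonneg _) ((hC x).trans (le_abs_self C)) hr.le

lemma auxIntOn {n : ℕ} {f : Euc n → ℝ} (hf : Measurable f) {C : ℝ} (hC : ∀ x, |f x| ≤ C)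
    {r : ℝ} (hr : 0 < r) (Q : Cube n) : IntegrableOn (fun x => |f x| ^ r) Q.set :=
  auxIntOn' hf hC hr (by simp [auxVolume]) (auxMeas Q)

/-- `ofReal` of the `lrAvg`. -/
lemma auxAvg {n : ℕ} {f : Euc n → ℝ} (hf : Measurable f) {C : ℝ} (hC : ∀ x, |f x| ≤ C)
    {r : ℝ} (hr : 0 < r) (Q : Cube n) :
    ENNReal.ofReal ((((∫ x in Q.set, |f x| ^ r) / Q.vol) ^ (1/r) : ℝ)) =
      ((∫⁻ x in Q.set, ENNReal.ofReal (|f x| ^ r)) / ENNReal.ofReal Q.vol) ^ (1/r) := by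
  have hint := auxIntOn hf hC hr Q
  have h1 : ENNReal.ofReal (∫ x in Q.set, |f x| ^ r) = ∫⁻ x in Q.set, ENNReal.ofReal (|f x| ^ r) :=
    ofReal_integral_eq_lintegral_ofReal hint
      (Filter.Eventually.of_forall fun x => Real.rpow_nonneg (abs_nonneg _) r)
  rw [← h1, ← ENNReal.ofReal_div_of_pos (auxVolPos Q),
    ENNReal.ofReal_rpow_of_nonneg (div_nonneg (integral_nonneg fun x => Real.rpow_nonneg (abs_nonneg _) r) (auxVolPos Q).le) (by positivity)]

lemma auxLintLe {n : ℕ} {f : Euc n → ℝ} {C : ℝ} (hC : ∀ x, |f x| ≤ C)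
    {r : ℝ} (hr : 0 < r) (Q : Cube n) :
    (∫⁻ x in Q.set, ENNReal.ofReal (|f x| ^ r)) ≤ ENNReal.ofReal (|C| ^ r) * ENNReal.ofReal Q.vol := by
  rw [← auxVolume, ← setLIntegral_const Q.set]
  apply lintegral_mono fun x => ENNReal.ofReal_le_ofReal ?_
  exact Real.rpow_le_rpow (abs_nonneg _) ((hC x).trans (le_abs_self C)) hr.le


lemma auxAvgNonneg {n : ℕ} (r : ℝ) (Q : Cube n) (f : Euc n → ℝ) : 0 ≤ lrAvg r Q f :=
  Real.rpow_nonneg (div_nonneg (integral_nonneg fun x => Real.rpow_nonneg (abs_nonneg _) r)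
    (auxVolPos Q).le) _


lemma auxDivCancel {V X Y : ℝ≥0∞} (hV0 : V ≠ 0) (hVt : V ≠ ⊤) {a b : ℝ}
    (ha : 0 ≤ a) (hb : 0 ≤ b) (hab : a + b = 1) :
    (X / V) ^ a * ((Y / V) ^ b) * V = X ^ a * Y ^ b := by
  have hVa0 : V ^ a ≠ 0 := by simp [ENNReal.rpow_eq_zero_iff, hV0, hVt]
  have hVat : V ^ a ≠ ⊤ := by simp [ENNReal.rpow_eq_top_iff, hV0, hVt]
  have hVb0 : V ^ b ≠ 0 := by simp [ENNReal.rpow_eq_zero_iff, hV0, hVt]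
  rw [ENNReal.div_rpow_of_nonneg _ _ ha, ENNReal.div_rpow_of_nonneg _ _ hb,
    div_eq_mul_inv, div_eq_mul_inv, mul_mul_mul_comm,
    ← ENNReal.mul_inv (Or.inl hVa0) (Or.inl hVat),
    ← ENNReal.rpow_add _ _ hV0 hVt, hab, ENNReal.rpow_one, mul_assoc,
    ENNReal.inv_mul_cancel hV0 hVt, mul_one]

lemma auxProd {n : ℕ} {f g : Euc n → ℝ} (hf : Measurable f) (hg : Measurable g)
    {Cf Cg : ℝ} (hCf : ∀ x, |f x| ≤ Cf) (hCg : ∀ x, |g x| ≤ Cg)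
    {r₁ r₂ : ℝ} (hr₁ : 0 < r₁) (hr₂ : 0 < r₂) (Q : Cube n) :
    ENNReal.ofReal (lrAvg r₁ Q f * lrAvg r₂ Q g) ^ (1/r₁ + 1/r₂)⁻¹ * ENNReal.ofReal Q.vol =
      (∫⁻ x in Q.set, ENNReal.ofReal (|f x| ^ r₁)) ^ (1 / (r₁ * (1/r₁ + 1/r₂))) *
      (∫⁻ x in Q.set, ENNReal.ofReal (|g x| ^ r₂)) ^ (1 / (r₂ * (1/r₁ + 1/r₂))) := by
  set s : ℝ := 1/r₁ + 1/r₂ with hs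
  have hspos : 0 < s := by positivity
  set V : ℝ≥0∞ := ENNReal.ofReal Q.vol with hV
  have hV0 : V ≠ 0 := by simp [hV, ENNReal.ofReal_eq_zero, not_le, auxVolPos Q]
  have hVtop : V ≠ ⊤ := ENNReal.ofReal_ne_top
  set L₁ : ℝ≥0∞ := ∫⁻ x in Q.set, ENNReal.ofReal (|f x| ^ r₁) with hL₁
  set L₂ : ℝ≥0∞ := ∫⁻ x in Q.set, ENNReal.ofReal (|g x| ^ r₂) with hL₂
  have h1 : ENNReal.ofReal (lrAvg r₁ Q f * lrAvg r₂ Q g) =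
      (L₁ / V) ^ (1/r₁) * (L₂ / V) ^ (1/r₂) := by
    rw [ENNReal.ofReal_mul (auxAvgNonneg r₁ Q f)]
    show ENNReal.ofReal ((((∫ x in Q.set, |f x| ^ r₁) / Q.vol) ^ (1/r₁) : ℝ)) *
      ENNReal.ofReal ((((∫ x in Q.set, |g x| ^ r₂) / Q.vol) ^ (1/r₂) : ℝ)) = _
    rw [auxAvg hf hCf hr₁ Q, auxAvg hg hCg hr₂ Q]
  have hab : 1/r₁ * s⁻¹ + 1/r₂ * s⁻¹ = 1 := by
    rw [← add_mul, ← hs, mul_inv_cancel₀ hspos.ne']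
  have hexp₁ : 1/r₁ * s⁻¹ = 1 / (r₁ * s) := by rw [one_div, one_div, ← mul_inv]
  have hexp₂ : 1/r₂ * s⁻¹ = 1 / (r₂ * s) := by rw [one_div, one_div, ← mul_inv]
  rw [h1, ENNReal.mul_rpow_of_nonneg _ _ (by positivity), ← ENNReal.rpow_mul, ← ENNReal.rpow_mul,
    auxDivCancel hV0 hVtop (by positivity) (by positivity) hab, hexp₁, hexp₂]

lemma auxHolder {ι : Type*} [Countable ι] (u v : ι → ℝ≥0∞) {a b : ℝ}
    (ha : 0 < a) (hb : 0 < b) (hab : a + b = 1) :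
    ∑' i, u i ^ a * v i ^ b ≤ (∑' i, u i) ^ a * (∑' i, v i) ^ b := by
  letI : MeasurableSpace ι := ⊤
  haveI : MeasurableSingletonClass ι := ⟨fun _ => MeasurableSpace.measurableSet_top⟩
  have ha1 : a < 1 := by linarith
  have hpq : Real.HolderConjugate (1/a) (1/b) := by
    rw [Real.holderConjugate_iff]
    constructor
    · rw [lt_div_iff₀ ha, one_mul]; exact ha1
    · rw [one_div, one_div, inv_inv, inv_inv]; exact hab
  have H := ENNReal.lintegral_mul_le_Lp_mul_Lq (Measure.count : Measure ι) hpq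
    (f := fun i => u i ^ a) (g := fun i => v i ^ b)
    (Measurable.aemeasurable fun _ _ => MeasurableSpace.measurableSet_top)
    (Measurable.aemeasurable fun _ _ => MeasurableSpace.measurableSet_top)
  simp only [Pi.mul_apply, lintegral_count, ← ENNReal.rpow_mul,
    mul_one_div_cancel ha.ne', mul_one_div_cancel hb.ne', ENNReal.rpow_one,
    one_div_one_div] at H
  exact H

lemma auxMaximal {n : ℕ} (hn : 0 < n) {𝒟 : Set (Cube n)} (h𝒟 : IsDyadicGrid 𝒟)
    (A : Cube n → ℝ) {t : ℝ}
    (hbd : ∃ J : ℤ, ∀ R ∈ 𝒟, ∀ j : ℤ, R.side = (2:ℝ)^j → t < A R → j ≤ J)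
    {R₀ : Cube n} (hR₀ : R₀ ∈ 𝒟) {x : Euc n} (hx : x ∈ R₀.set) (ht : t < A R₀) :
    ∃ M ∈ 𝒟, x ∈ M.set ∧ t < A M ∧
      ∀ R ∈ 𝒟, t < A R → M.set ⊆ R.set → R = M := by
  obtain ⟨J, hJ⟩ := hbd
  set P : ℤ → Prop := fun j => ∃ R, R ∈ 𝒟 ∧ R.side = (2:ℝ)^j ∧ x ∈ R.set ∧ t < A R with hP
  have hbdd : ∀ z : ℤ, P z → z ≤ J := by
    rintro z ⟨R, hR, hside, -, hA⟩
    exact hJ R hR z hside hA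
  have hne : ∃ z, P z := by
    obtain ⟨j₀, hj₀⟩ := h𝒟.2.1 R₀ hR₀
    exact ⟨j₀, R₀, hR₀, hj₀, hx, ht⟩
  obtain ⟨jm, ⟨M, hM𝒟, hMside, hMx, hMA⟩, hmax⟩ := Int.exists_greatest_of_bdd ⟨J, hbdd⟩ hne
  refine ⟨M, hM𝒟, hMx, hMA, ?_⟩
  intro R hR hAR hsub
  obtain ⟨j', hj'⟩ := h𝒟.2.1 R hR
  have hxR : x ∈ R.set := hsub hMx
  have hj'le : j' ≤ jm := hmax _ ⟨R, hR, hj', hxR, hAR⟩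
  have hside_le : R.side ≤ M.side := by
    rw [hj', hMside]
    exact zpow_le_zpow_right₀ one_le_two hj'le
  have hside_ge : M.side ≤ R.side := auxSideMono hn hsub
  exact auxUniqueScale h𝒟 hR hM𝒟 (le_antisymm hside_ge hside_le).symm hxR hMx

lemma auxLogBound {c : ℝ} (hc : 0 < c) (D : ℝ) :
    ∃ J : ℤ, ∀ j : ℤ, (2:ℝ) ^ ((j:ℝ) * c) ≤ D → j ≤ J := by
  refine ⟨⌈Real.logb 2 (max D 1) / c⌉, fun j hj => ?_⟩
  have hD' : (0:ℝ) < max D 1 := lt_max_of_lt_right one_pos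
  have h2 : (2:ℝ) ^ ((j:ℝ)*c) ≤ (2:ℝ) ^ (Real.logb 2 (max D 1)) := by
    rw [Real.rpow_logb two_pos (by norm_num) hD']
    exact hj.trans (le_max_left _ _)
  have h3 : (j:ℝ)*c ≤ Real.logb 2 (max D 1) := (Real.rpow_le_rpow_left_iff one_lt_two).1 h2
  have h4 : (j:ℝ) ≤ Real.logb 2 (max D 1)/c := (le_div_iff₀ hc).2 h3
  exact_mod_cast h4.trans (Int.le_ceil _)

lemma auxIntGlobal {n : ℕ} {f : Euc n → ℝ} (hf : Measurable f) {C : ℝ} (hC : ∀ x, |f x| ≤ C)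
    (hfc : HasCompactSupport f) {r : ℝ} (hr : 0 < r) :
    Integrable (fun x => |f x| ^ r) := by
  rw [← integrableOn_iff_integrable_of_support_subset
    (s := tsupport f) (fun x hx => ?_)]
  · exact auxIntOn' hf hC hr (hfc.isCompact.measure_lt_top.ne) (isClosed_tsupport f).measurableSet
  · by_contra hxs
    have : f x = 0 := image_eq_zero_of_notMem_tsupport hxs
    simp [Function.mem_support, this, Real.zero_rpow hr.ne'] at hx

lemma auxSetIntLe {n : ℕ} {f : Euc n → ℝ} (hf : Measurable f) {C : ℝ} (hC : ∀ x, |f x| ≤ C)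
    (hfc : HasCompactSupport f) {r : ℝ} (hr : 0 < r) (s : Set (Euc n)) :
    ∫ x in s, |f x| ^ r ≤ ∫ x, |f x| ^ r := by
  apply setIntegral_le_integral (auxIntGlobal hf hC hfc hr)
  exact Filter.Eventually.of_forall fun x => Real.rpow_nonneg (abs_nonneg _) r

lemma auxDecay {n : ℕ} {f g : Euc n → ℝ} (hf : Measurable f) (hg : Measurable g)
    {Cf Cg : ℝ} (hCf : ∀ x, |f x| ≤ Cf) (hCg : ∀ x, |g x| ≤ Cg)
    (hfc : HasCompactSupport f) (hgc : HasCompactSupport g)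
    {r₁ r₂ : ℝ} (hr₁ : 0 < r₁) (hr₂ : 0 < r₂) (hn : 0 < n) {t : ℝ} (ht : 0 < t) :
    ∃ J : ℤ, ∀ R : Cube n, ∀ j : ℤ, R.side = (2:ℝ)^j →
      t < lrAvg r₁ R f * lrAvg r₂ R g → j ≤ J := by
  set If : ℝ := ∫ x, |f x| ^ r₁ with hIf
  set Ig : ℝ := ∫ x, |g x| ^ r₂ with hIg
  have hIf0 : 0 ≤ If := integral_nonneg fun x => Real.rpow_nonneg (abs_nonneg _) _
  have hIg0 : 0 ≤ Ig := integral_nonneg fun x => Real.rpow_nonneg (abs_nonneg _) _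
  set s : ℝ := 1/r₁ + 1/r₂ with hs
  have hspos : 0 < s := by positivity
  have hc : (0:ℝ) < (n:ℝ) * s := by positivity
  obtain ⟨J, hJ⟩ := auxLogBound hc ((If ^ (1/r₁) * Ig ^ (1/r₂)) / t)
  refine ⟨J, fun R j hside hlt => ?_⟩
  have hvolpos : (0:ℝ) < R.vol := auxVolPos R
  have h1 : lrAvg r₁ R f ≤ (If / R.vol) ^ (1/r₁) := by
    simp only [lrAvg]
    gcongr
    exact auxSetIntLe hf hCf hfc hr₁ R.set
  have h2 : lrAvg r₂ R g ≤ (Ig / R.vol) ^ (1/r₂) := by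
    simp only [lrAvg]
    gcongr
    exact auxSetIntLe hg hCg hgc hr₂ R.set
  have h3 : t < (If / R.vol) ^ (1/r₁) * ((Ig / R.vol) ^ (1/r₂)) :=
    lt_of_lt_of_le hlt (mul_le_mul h1 h2 (auxAvgNonneg _ _ _) (by positivity))
  rw [Real.div_rpow hIf0 hvolpos.le, Real.div_rpow hIg0 hvolpos.le, div_mul_div_comm,
    ← Real.rpow_add hvolpos, ← hs] at h3
  have h4 : t * R.vol ^ s < If ^ (1/r₁) * Ig ^ (1/r₂) :=
    (lt_div_iff₀ (Real.rpow_pos_of_pos hvolpos s)).1 h3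
  have h5 : R.vol ^ s ≤ (If ^ (1/r₁) * Ig ^ (1/r₂)) / t := by
    rw [le_div_iff₀ ht, mul_comm]
    exact h4.le
  have hvol : R.vol = (2:ℝ) ^ (((j * (n:ℤ) : ℤ) : ℝ)) := by
    show R.side ^ n = _
    rw [hside, Real.rpow_intCast, ← zpow_natCast ((2:ℝ)^j) n, ← zpow_mul]
  have h6 : (2:ℝ) ^ ((j:ℝ) * ((n:ℝ) * s)) ≤ (If ^ (1/r₁) * Ig ^ (1/r₂)) / t := by
    have : (j:ℝ) * ((n:ℝ) * s) = ((j * (n:ℤ) : ℤ) : ℝ) * s := by push_cast; ring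
    rw [this, Real.rpow_mul (by norm_num : (0:ℝ) ≤ 2), ← hvol]
    exact h5
  exact hJ j h6



lemma auxKey1 {n : ℕ} (hn : 0 < n) {𝒟 : Set (Cube n)} (h𝒟 : IsDyadicGrid 𝒟)
    {f g : Euc n → ℝ} (hf : Measurable f) (hg : Measurable g)
    {Cf Cg : ℝ} (hCf : ∀ x, |f x| ≤ Cf) (hCg : ∀ x, |g x| ≤ Cg)
    {r₁ r₂ : ℝ} (hr₁ : 0 < r₁) (hr₂ : 0 < r₂) {S : ℤ → Set (Cube n)} {c : ℝ}
    (hc : c = ((n:ℝ)+1) * (1/r₁ + 1/r₂))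
    (hS : ∀ (k : ℤ) (Q : Cube n), Q ∈ S k ↔ Q ∈ 𝒟 ∧
      (2:ℝ)^((k:ℝ)*c) < lrAvg r₁ Q f * lrAvg r₂ Q g ∧
      ∀ R ∈ 𝒟, (2:ℝ)^((k:ℝ)*c) < lrAvg r₁ R f * lrAvg r₂ R g → Q.set ⊆ R.set → R = Q)
    (k : ℤ) (Q : Cube n) (hQ : Q ∈ S k) :
    volume (Q.set ∩ ⋃ P ∈ S (k+1), Cube.set P) ≤ ENNReal.ofReal Q.vol / 2 := by
  classical
  obtain ⟨hQ𝒟, hQthr, hQmax⟩ := (hS k Q).1 hQ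
  have hspos : (0:ℝ) < 1/r₁ + 1/r₂ := by positivity
  have hss : (1/r₁ + 1/r₂) * (1/r₁ + 1/r₂)⁻¹ = 1 := mul_inv_cancel₀ hspos.ne'
  -- the sub-family of maximal cubes at level k+1 inside Q
  set T : Set (Cube n) := {P | P ∈ S (k+1) ∧ P.set ⊆ Q.set} with hT
  have hTsub : ∀ P ∈ T, P ∈ 𝒟 := fun P hP => ((hS _ P).1 hP.1).1
  have hTcount : T.Countable := h𝒟.1.mono hTsub
  haveI := hTcount.to_subtype
  -- cubes at level k+1 meeting Q are inside Q
  have hsub : ∀ P ∈ S (k+1), (P.set ∩ Q.set).Nonempty → P.set ⊆ Q.set := by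
    intro P hP hne
    obtain ⟨hP𝒟, hPthr, hPmax⟩ := (hS _ P).1 hP
    rcases auxNested h𝒟 hP𝒟 hQ𝒟 hne with h | h
    · exact h
    · have hmono : (2:ℝ)^((k:ℝ)*c) < (2:ℝ)^(((k+1:ℤ):ℝ)*c) := by
        apply Real.rpow_lt_rpow_left_iff (x := 2) one_lt_two |>.2
        have : (0:ℝ) < c := by rw [hc]; positivity
        push_cast
        nlinarith
      have := hQmax P hP𝒟 (hmono.trans hPthr) h
      rw [this]
  -- pairwise disjointness of the maximal cubes
  have hTdisj : T.PairwiseDisjoint Cube.set := by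
    intro P hP P' hP' hne
    rw [Function.onFun]
    by_contra hcon
    obtain ⟨x, hx, hx'⟩ := Set.not_disjoint_iff.1 hcon
    obtain ⟨hP𝒟, hPthr, hPmax⟩ := (hS _ P).1 hP.1
    obtain ⟨hP'𝒟, hP'thr, hP'max⟩ := (hS _ P').1 hP'.1
    rcases auxNested h𝒟 hP𝒟 hP'𝒟 ⟨x, hx, hx'⟩ with h | h
    · exact hne (hPmax P' hP'𝒟 hP'thr h).symm
    · exact hne (hP'max P hP𝒟 hPthr h)
  -- the intersection is the union of the cubes in `T`
  have hUnion : Q.set ∩ (⋃ P ∈ S (k+1), Cube.set P) = ⋃ P ∈ T, Cube.set P := by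
    ext x
    constructor
    · rintro ⟨hxQ, hxU⟩
      simp only [Set.mem_iUnion] at hxU ⊢
      obtain ⟨P, hP, hxP⟩ := hxU
      exact ⟨P, ⟨hP, hsub P hP ⟨x, hxP, hxQ⟩⟩, hxP⟩
    · intro hx
      simp only [Set.mem_iUnion] at hx
      obtain ⟨P, hP, hxP⟩ := hx
      exact ⟨hP.2 hxP, Set.mem_iUnion.2 ⟨P, Set.mem_iUnion.2 ⟨hP.1, hxP⟩⟩⟩
  -- the parent cube of Q
  obtain ⟨k₀, hk₀⟩ := h𝒟.2.1 Q hQ𝒟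
  obtain ⟨R, ⟨hR𝒟, hRside, hRx⟩, -⟩ := h𝒟.2.2.1 (k₀+1) ((WithLp.equiv 2 _).symm Q.corner)
  have hk₀lt : (2:ℝ)^k₀ < (2:ℝ)^(k₀+1) := zpow_lt_zpow_right₀ one_lt_two (lt_add_one k₀)
  have hQR : Q.set ⊆ R.set := by
    rcases auxNested h𝒟 hQ𝒟 hR𝒟 ⟨_, auxCornerMem Q, hRx⟩ with h | h
    · exact h
    · exfalso
      have := auxSideMono hn h
      rw [hRside, hk₀] at this
      linarith
  have hRQ_ne : R ≠ Q := by
    intro h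
    rw [h, hk₀] at hRside
    exact absurd hRside.symm (ne_of_gt hk₀lt)
  have hRfail : lrAvg r₁ R f * lrAvg r₂ R g ≤ (2:ℝ)^((k:ℝ)*c) := by
    by_contra hcon
    push_neg at hcon
    exact hRQ_ne (hQmax R hR𝒟 hcon hQR)
  have hRvol : R.vol = 2^n * Q.vol := by
    show R.side ^ n = _
    rw [show (2:ℝ)^n * Q.vol = 2^n * ((2:ℝ)^k₀)^n from by rw [← hk₀]; rfl]
    rw [hRside, zpow_add_one₀ (two_ne_zero), mul_comm ((2:ℝ)^k₀) 2, mul_pow]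
  -- exponent bookkeeping
  have hdd : ∀ k' : ℤ, ENNReal.ofReal ((2:ℝ)^((k':ℝ)*c)) ^ (1/r₁+1/r₂)⁻¹
      = ENNReal.ofReal ((2:ℝ)^((k':ℝ)*((n:ℝ)+1))) := by
    intro k'
    rw [ENNReal.ofReal_rpow_of_nonneg (Real.rpow_nonneg (by norm_num) _) (by positivity)]
    congr 1
    rw [← Real.rpow_mul (by norm_num : (0:ℝ) ≤ 2)]
    congr 1
    calc (k':ℝ)*c*(1/r₁+1/r₂)⁻¹
        = (k':ℝ)*((n:ℝ)+1)*((1/r₁+1/r₂)*(1/r₁+1/r₂)⁻¹) := by rw [hc]; ring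
      _ = (k':ℝ)*((n:ℝ)+1) := by rw [hss, mul_one]
  have hab : 1/(r₁*(1/r₁+1/r₂)) + 1/(r₂*(1/r₁+1/r₂)) = 1 := by
    rw [div_mul_eq_div_div, div_mul_eq_div_div, ← add_div, div_self hspos.ne']
  have hapos : (0:ℝ) < 1/(r₁*(1/r₁+1/r₂)) := by positivity
  have hbpos : (0:ℝ) < 1/(r₂*(1/r₁+1/r₂)) := by positivity
  -- per-cube lower bound
  have hPer : ∀ P : T, ENNReal.ofReal ((2:ℝ)^((((k+1):ℤ):ℝ)*((n:ℝ)+1))) *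
      ENNReal.ofReal ((P : Cube n).vol) ≤
      (∫⁻ x in (P:Cube n).set, ENNReal.ofReal (|f x| ^ r₁)) ^ (1/(r₁*(1/r₁+1/r₂))) *
      (∫⁻ x in (P:Cube n).set, ENNReal.ofReal (|g x| ^ r₂)) ^ (1/(r₂*(1/r₁+1/r₂))) := by
    intro P
    have h1 := ((hS _ P).1 P.2.1).2.1
    calc ENNReal.ofReal ((2:ℝ)^((((k+1):ℤ):ℝ)*((n:ℝ)+1))) * ENNReal.ofReal ((P : Cube n).vol)
        = ENNReal.ofReal ((2:ℝ)^((((k+1):ℤ):ℝ)*c)) ^ (1/r₁+1/r₂)⁻¹ *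
          ENNReal.ofReal ((P : Cube n).vol) := by rw [hdd]
      _ ≤ ENNReal.ofReal (lrAvg r₁ (P:Cube n) f * lrAvg r₂ (P:Cube n) g) ^ (1/r₁+1/r₂)⁻¹ *
          ENNReal.ofReal ((P : Cube n).vol) :=
          mul_le_mul_left (ENNReal.rpow_le_rpow (ENNReal.ofReal_le_ofReal h1.le)
            (by positivity)) _
      _ = _ := auxProd hf hg hCf hCg hr₁ hr₂ (P:Cube n)
  -- summing the integrals over the disjoint cubes
  have hdisjT : Pairwise (Function.onFun Disjoint fun P : T => (P:Cube n).set) :=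
    fun P P' hne => hTdisj P.2 P'.2 (Subtype.coe_ne_coe.2 hne)
  have hUsub : (⋃ P : T, (P:Cube n).set) ⊆ R.set :=
    Set.iUnion_subset fun P => P.2.2.trans hQR
  have hsum₁ : ∑' (P : T), (∫⁻ x in (P:Cube n).set, ENNReal.ofReal (|f x| ^ r₁)) ≤
      ∫⁻ x in R.set, ENNReal.ofReal (|f x| ^ r₁) := by
    rw [← lintegral_iUnion (fun P : T => auxMeas _) hdisjT]
    exact lintegral_mono' (Measure.restrict_mono hUsub le_rfl) le_rfl
  have hsum₂ : ∑' (P : T), (∫⁻ x in (P:Cube n).set, ENNReal.ofReal (|g x| ^ r₂)) ≤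
      ∫⁻ x in R.set, ENNReal.ofReal (|g x| ^ r₂) := by
    rw [← lintegral_iUnion (fun P : T => auxMeas _) hdisjT]
    exact lintegral_mono' (Measure.restrict_mono hUsub le_rfl) le_rfl
  -- the chain of inequalities
  have hXdd : (∑' (P : T), ENNReal.ofReal ((P : Cube n).vol)) *
      ENNReal.ofReal ((2:ℝ)^((((k+1):ℤ):ℝ)*((n:ℝ)+1))) ≤
      ENNReal.ofReal ((2:ℝ)^((k:ℝ)*((n:ℝ)+1))) * ENNReal.ofReal R.vol := by
    calc (∑' (P : T), ENNReal.ofReal ((P : Cube n).vol)) *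
        ENNReal.ofReal ((2:ℝ)^((((k+1):ℤ):ℝ)*((n:ℝ)+1)))
        = ∑' (P : T), ENNReal.ofReal ((P : Cube n).vol) *
            ENNReal.ofReal ((2:ℝ)^((((k+1):ℤ):ℝ)*((n:ℝ)+1))) := ENNReal.tsum_mul_right.symm
      _ ≤ ∑' (P : T),
            (∫⁻ x in (P:Cube n).set, ENNReal.ofReal (|f x| ^ r₁)) ^ (1/(r₁*(1/r₁+1/r₂))) *
            (∫⁻ x in (P:Cube n).set, ENNReal.ofReal (|g x| ^ r₂)) ^ (1/(r₂*(1/r₁+1/r₂))) :=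
          ENNReal.tsum_le_tsum (fun P => by rw [mul_comm]; exact hPer P)
      _ ≤ (∑' (P : T), ∫⁻ x in (P:Cube n).set, ENNReal.ofReal (|f x| ^ r₁)) ^
              (1/(r₁*(1/r₁+1/r₂))) *
            (∑' (P : T), ∫⁻ x in (P:Cube n).set, ENNReal.ofReal (|g x| ^ r₂)) ^
              (1/(r₂*(1/r₁+1/r₂))) := auxHolder _ _ hapos hbpos hab
      _ ≤ (∫⁻ x in R.set, ENNReal.ofReal (|f x| ^ r₁)) ^ (1/(r₁*(1/r₁+1/r₂))) *
            (∫⁻ x in R.set, ENNReal.ofReal (|g x| ^ r₂)) ^ (1/(r₂*(1/r₁+1/r₂))) :=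
          mul_le_mul' (ENNReal.rpow_le_rpow hsum₁ hapos.le)
            (ENNReal.rpow_le_rpow hsum₂ hbpos.le)
      _ = ENNReal.ofReal (lrAvg r₁ R f * lrAvg r₂ R g) ^ (1/r₁+1/r₂)⁻¹ *
            ENNReal.ofReal R.vol := (auxProd hf hg hCf hCg hr₁ hr₂ R).symm
      _ ≤ ENNReal.ofReal ((2:ℝ)^((k:ℝ)*c)) ^ (1/r₁+1/r₂)⁻¹ * ENNReal.ofReal R.vol :=
          mul_le_mul_left (ENNReal.rpow_le_rpow (ENNReal.ofReal_le_ofReal hRfail)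
            (by positivity)) _
      _ = ENNReal.ofReal ((2:ℝ)^((k:ℝ)*((n:ℝ)+1))) * ENNReal.ofReal R.vol := by rw [hdd]
  have hXle : (∑' (P : T), ENNReal.ofReal ((P : Cube n).vol)) ≤
      ENNReal.ofReal ((2:ℝ)^((k:ℝ)*((n:ℝ)+1))) * ENNReal.ofReal R.vol /
        ENNReal.ofReal ((2:ℝ)^((((k+1):ℤ):ℝ)*((n:ℝ)+1))) := by
    rw [ENNReal.le_div_iff_mul_le
      (Or.inl (by simp [ENNReal.ofReal_eq_zero, not_le, Real.rpow_pos_of_pos two_pos]))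
      (Or.inl ENNReal.ofReal_ne_top)]
    exact hXdd
  have hfinal : ENNReal.ofReal ((2:ℝ)^((k:ℝ)*((n:ℝ)+1))) * ENNReal.ofReal R.vol /
      ENNReal.ofReal ((2:ℝ)^((((k+1):ℤ):ℝ)*((n:ℝ)+1))) = ENNReal.ofReal Q.vol / 2 := by
    rw [hRvol, ← ENNReal.ofReal_mul (Real.rpow_nonneg (by norm_num) _),
      ← ENNReal.ofReal_div_of_pos (Real.rpow_pos_of_pos two_pos _)]
    rw [show (ENNReal.ofReal Q.vol) / 2 = ENNReal.ofReal (Q.vol / 2) from by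
      rw [ENNReal.ofReal_div_of_pos two_pos, ENNReal.ofReal_ofNat]]
    congr 1
    rw [show ((((k+1):ℤ)):ℝ) = (k:ℝ)+1 from by push_cast; ring]
    rw [← Real.rpow_natCast (2:ℝ) n]
    rw [div_eq_div_iff (Real.rpow_pos_of_pos two_pos _).ne' (two_ne_zero)]
    rw [show ((k:ℝ)+1)*((n:ℝ)+1) = (k:ℝ)*((n:ℝ)+1) + ((n:ℝ) + 1) from by ring,
      Real.rpow_add two_pos, Real.rpow_add two_pos, Real.rpow_one]
    ring
  calc volume (Q.set ∩ ⋃ P ∈ S (k+1), Cube.set P)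
      = ∑' (P : T), volume (P:Cube n).set := by
        rw [hUnion, measure_biUnion hTcount hTdisj (fun P _ => auxMeas P)]
    _ = ∑' (P : T), ENNReal.ofReal ((P : Cube n).vol) := tsum_congr fun P => auxVolume _
    _ ≤ _ := hfinal ▸ hXle




lemma auxKey2 {n : ℕ} (hn : 0 < n) {𝒟 : Set (Cube n)} (h𝒟 : IsDyadicGrid 𝒟)
    {f g : Euc n → ℝ} (hf : Measurable f) (hg : Measurable g)
    {Cf Cg : ℝ} (hCf : ∀ x, |f x| ≤ Cf) (hCg : ∀ x, |g x| ≤ Cg)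
    (hfc : HasCompactSupport f) (hgc : HasCompactSupport g)
    {r₁ r₂ : ℝ} (hr₁ : 0 < r₁) (hr₂ : 0 < r₂) {S : ℤ → Set (Cube n)} {c : ℝ}
    (hc : c = ((n:ℝ)+1) * (1/r₁ + 1/r₂))
    (hS : ∀ (k : ℤ) (Q : Cube n), Q ∈ S k ↔ Q ∈ 𝒟 ∧
      (2:ℝ)^((k:ℝ)*c) < lrAvg r₁ Q f * lrAvg r₂ Q g ∧
      ∀ R ∈ 𝒟, (2:ℝ)^((k:ℝ)*c) < lrAvg r₁ R f * lrAvg r₂ R g → Q.set ⊆ R.set → R = Q)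
    (k k' : ℤ) (Q Q' : Cube n) (hQ : Q ∈ S k) (hQ' : Q' ∈ S k') (hne : (k, Q) ≠ (k', Q')) :
    Disjoint (Q.set \ ⋃ P ∈ S (k+1), Cube.set P) (Q'.set \ ⋃ P ∈ S (k'+1), Cube.set P) := by
  classical
  have main : ∀ k k' : ℤ, ∀ Q Q' : Cube n, Q ∈ S k → Q' ∈ S k' → k < k' →
      Disjoint (Q.set \ ⋃ P ∈ S (k+1), Cube.set P) (Q'.set \ ⋃ P ∈ S (k'+1), Cube.set P) := by
    intro k k' Q Q' hQ hQ' hkk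
    rw [Set.disjoint_left]
    rintro x ⟨hxQ, hxnU⟩ ⟨hxQ', -⟩
    obtain ⟨hQ'𝒟, hQ'thr, -⟩ := (hS k' Q').1 hQ'
    have hcnn : (0:ℝ) ≤ c := by rw [hc]; positivity
    have hthr : (2:ℝ)^((((k+1):ℤ):ℝ)*c) < lrAvg r₁ Q' f * lrAvg r₂ Q' g := by
      refine lt_of_le_of_lt ?_ hQ'thr
      apply Real.rpow_le_rpow_left_iff (x := 2) one_lt_two |>.2
      have : (((k+1):ℤ):ℝ) ≤ (k':ℝ) := by exact_mod_cast hkk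
      exact mul_le_mul_of_nonneg_right this hcnn
    obtain ⟨J, hJ⟩ := auxDecay hf hg hCf hCg hfc hgc hr₁ hr₂ hn
      (t := (2:ℝ)^((((k+1):ℤ):ℝ)*c)) (Real.rpow_pos_of_pos two_pos _)
    obtain ⟨M, hM𝒟, hMx, hMthr, hMmax⟩ := auxMaximal hn h𝒟
      (fun R => lrAvg r₁ R f * lrAvg r₂ R g) ⟨J, fun R _ j h1 h2 => hJ R j h1 h2⟩
      hQ'𝒟 hxQ' hthr
    have hM : M ∈ S (k+1) := (hS _ M).2 ⟨hM𝒟, hMthr, fun R hR h1 h2 => hMmax R hR h1 h2⟩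
    exact hxnU (Set.mem_biUnion hM hMx)
  rcases lt_trichotomy k k' with h | h | h
  · exact main k k' Q Q' hQ hQ' h
  · subst h
    have hQne : Q ≠ Q' := fun hqq => hne (by rw [hqq])
    have hdisj : Disjoint Q.set Q'.set := by
      by_contra hcon
      obtain ⟨x, hx, hx'⟩ := Set.not_disjoint_iff.1 hcon
      obtain ⟨hQ𝒟, hQthr, hQmax⟩ := (hS k Q).1 hQ
      obtain ⟨hQ'𝒟, hQ'thr, hQ'max⟩ := (hS k Q').1 hQ'
      rcases auxNested h𝒟 hQ𝒟 hQ'𝒟 ⟨x, hx, hx'⟩ with hss | hss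
      · exact hQne (hQmax Q' hQ'𝒟 hQ'thr hss).symm
      · exact hQne (hQ'max Q hQ𝒟 hQthr hss)
    exact hdisj.mono Set.diff_subset Set.diff_subset
  · exact (main k' k Q' Q hQ' hQ h).symm

lemma auxKey3 {n : ℕ} {Q : Cube n} {U : Set (Euc n)} (hU : MeasurableSet U)
    (hhalf : volume (Q.set ∩ U) ≤ ENNReal.ofReal Q.vol / 2) :
    ENNReal.ofReal Q.vol ≤ 2 * volume (Q.set \ U) := by
  have hvol : volume Q.set = ENNReal.ofReal Q.vol := auxVolume Q
  have hfin : volume (Q.set ∩ U) ≠ ⊤ :=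
    (lt_of_le_of_lt ((measure_mono Set.inter_subset_left).trans hvol.le)
      ENNReal.ofReal_lt_top).ne
  have hdiff : volume (Q.set \ U) = volume Q.set - volume (Q.set ∩ U) := by
    rw [show Q.set \ U = Q.set \ (Q.set ∩ U) from (Set.diff_self_inter).symm]
    exact measure_diff Set.inter_subset_left ((auxMeas Q).inter hU).nullMeasurableSet hfin
  rw [hdiff, hvol]
  calc ENNReal.ofReal Q.vol = 2 * (ENNReal.ofReal Q.vol / 2) := by
        rw [ENNReal.mul_div_cancel (by norm_num) (by norm_num)]
    _ ≤ 2 * (ENNReal.ofReal Q.vol - volume (Q.set ∩ U)) := by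
        apply mul_le_mul_right
        calc ENNReal.ofReal Q.vol / 2
            = ENNReal.ofReal Q.vol - ENNReal.ofReal Q.vol / 2 :=
              (ENNReal.sub_half ENNReal.ofReal_ne_top).symm
          _ ≤ ENNReal.ofReal Q.vol - volume (Q.set ∩ U) := tsub_le_tsub_left hhalf _

theorem stmt16 {n : ℕ} (hn : 0 < n) {p₁ p₂ m₁ m₂ : ℝ}
    (hp₁ : 1 < p₁) (hp₂ : 1 < p₂)
    (hm₁ : 1 < m₁) (hm₁' : m₁ ≤ p₁) (hm₂ : 1 < m₂) (hm₂' : m₂ ≤ p₂)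
    (𝒟 : Set (Cube n)) (h𝒟 : IsDyadicGrid 𝒟)
    (f g : Euc n → ℝ) (hf : Measurable f) (hg : Measurable g)
    (hf0 : ∀ x, 0 ≤ f x) (hg0 : ∀ x, 0 ≤ g x)
    (hfb : ∃ Cf : ℝ, ∀ x, f x ≤ Cf) (hgb : ∃ Cg : ℝ, ∀ x, g x ≤ Cg)
    (hfc : HasCompactSupport f) (hgc : HasCompactSupport g)
    (S : ℤ → Set (Cube n))
    (hS : ∀ (k : ℤ) (Q : Cube n), Q ∈ S k ↔
      Q ∈ 𝒟 ∧ (2 : ℝ) ^ ((k : ℝ) * ((n : ℝ) + 1) * (m₁ / p₁ + m₂ / p₂)) < lrAvg (p₁ / m₁) Q f * lrAvg (p₂ / m₂) Q g ∧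
        ∀ R ∈ 𝒟, (2 : ℝ) ^ ((k : ℝ) * ((n : ℝ) + 1) * (m₁ / p₁ + m₂ / p₂)) < lrAvg (p₁ / m₁) R f * lrAvg (p₂ / m₂) R g →
          Q.set ⊆ R.set → R = Q) :
    (∀ k : ℤ, ∀ Q ∈ S k,
      volume (Q.set ∩ ⋃ P ∈ S (k + 1), Cube.set P) ≤ ENNReal.ofReal Q.vol / 2) ∧
    (∀ k k' : ℤ, ∀ Q ∈ S k, ∀ Q' ∈ S k', (k, Q) ≠ (k', Q') →
      Disjoint (Q.set \ ⋃ P ∈ S (k + 1), Cube.set P)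
        (Q'.set \ ⋃ P ∈ S (k' + 1), Cube.set P)) ∧
    (∀ k : ℤ, ∀ Q ∈ S k,
      ENNReal.ofReal Q.vol ≤ 2 * volume (Q.set \ ⋃ P ∈ S (k + 1), Cube.set P)) ∧
    IsSparse (⋃ k : ℤ, S k) := by
  classical
  obtain ⟨Cf, hfb⟩ := hfb
  obtain ⟨Cg, hgb⟩ := hgb
  have hCf : ∀ x, |f x| ≤ Cf := fun x => by rw [abs_of_nonneg (hf0 x)]; exact hfb x
  have hCg : ∀ x, |g x| ≤ Cg := fun x => by rw [abs_of_nonneg (hg0 x)]; exact hgb x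
  have hp₁0 : (0:ℝ) < p₁ := lt_trans one_pos hp₁
  have hp₂0 : (0:ℝ) < p₂ := lt_trans one_pos hp₂
  have hm₁0 : (0:ℝ) < m₁ := lt_trans one_pos hm₁
  have hm₂0 : (0:ℝ) < m₂ := lt_trans one_pos hm₂
  have hr₁ : (0:ℝ) < p₁ / m₁ := div_pos hp₁0 hm₁0
  have hr₂ : (0:ℝ) < p₂ / m₂ := div_pos hp₂0 hm₂0
  have hc : ((n:ℝ)+1) * (1/(p₁/m₁) + 1/(p₂/m₂)) = ((n:ℝ)+1) * (1/(p₁/m₁) + 1/(p₂/m₂)) := rfl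
  have hexp : ∀ k : ℤ, (k:ℝ) * ((n:ℝ)+1) * (m₁/p₁ + m₂/p₂) =
      (k:ℝ) * (((n:ℝ)+1) * (1/(p₁/m₁) + 1/(p₂/m₂))) := by
    intro k
    rw [one_div_div, one_div_div]
    ring
  have hS' : ∀ (k : ℤ) (Q : Cube n), Q ∈ S k ↔ Q ∈ 𝒟 ∧
      (2:ℝ)^((k:ℝ)*(((n:ℝ)+1) * (1/(p₁/m₁) + 1/(p₂/m₂)))) <
        lrAvg (p₁/m₁) Q f * lrAvg (p₂/m₂) Q g ∧
      ∀ R ∈ 𝒟, (2:ℝ)^((k:ℝ)*(((n:ℝ)+1) * (1/(p₁/m₁) + 1/(p₂/m₂)))) <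
        lrAvg (p₁/m₁) R f * lrAvg (p₂/m₂) R g → Q.set ⊆ R.set → R = Q := by
    intro k Q
    rw [hS k Q, hexp k]
  have key1 : ∀ k : ℤ, ∀ Q ∈ S k,
      volume (Q.set ∩ ⋃ P ∈ S (k + 1), Cube.set P) ≤ ENNReal.ofReal Q.vol / 2 :=
    fun k Q hQ => auxKey1 hn h𝒟 hf hg hCf hCg hr₁ hr₂ rfl hS' k Q hQ
  have key2 : ∀ k k' : ℤ, ∀ Q ∈ S k, ∀ Q' ∈ S k', (k, Q) ≠ (k', Q') →
      Disjoint (Q.set \ ⋃ P ∈ S (k + 1), Cube.set P)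
        (Q'.set \ ⋃ P ∈ S (k' + 1), Cube.set P) :=
    fun k k' Q hQ Q' hQ' hne =>
      auxKey2 hn h𝒟 hf hg hCf hCg hfc hgc hr₁ hr₂ rfl hS' k k' Q Q' hQ hQ' hne
  have hcountS : ∀ k : ℤ, (S k).Countable :=
    fun k => h𝒟.1.mono (fun P hP => ((hS' k P).1 hP).1)
  have hUm : ∀ k : ℤ, MeasurableSet (⋃ P ∈ S k, Cube.set P) :=
    fun k => MeasurableSet.biUnion (hcountS k) (fun P _ => auxMeas P)
  have key3 : ∀ k : ℤ, ∀ Q ∈ S k,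
      ENNReal.ofReal Q.vol ≤ 2 * volume (Q.set \ ⋃ P ∈ S (k + 1), Cube.set P) :=
    fun k Q hQ => auxKey3 (hUm (k+1)) (key1 k Q hQ)
  have hcpos : (0:ℝ) < ((n:ℝ)+1) * (1/(p₁/m₁) + 1/(p₂/m₂)) := by positivity
  have hbddQ : ∀ Q : Cube n, ∃ b : ℤ, ∀ z : ℤ, Q ∈ S z → z ≤ b := by
    intro Q
    obtain ⟨J, hJ⟩ := auxLogBound hcpos (lrAvg (p₁/m₁) Q f * lrAvg (p₂/m₂) Q g)
    exact ⟨J, fun z hz => hJ z ((hS' z Q).1 hz).2.1.le⟩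
  refine ⟨key1, key2, key3, ?_⟩
  have hK : ∀ Q : Cube n, ∀ h : ∃ z : ℤ, Q ∈ S z,
      Q ∈ S (Classical.choose (Int.exists_greatest_of_bdd (hbddQ Q) h)) :=
    fun Q h => (Classical.choose_spec (Int.exists_greatest_of_bdd (hbddQ Q) h)).1
  refine ⟨fun Q => if h : ∃ z : ℤ, Q ∈ S z then
      Q.set \ ⋃ P ∈ S (Classical.choose (Int.exists_greatest_of_bdd (hbddQ Q) h) + 1),
        Cube.set P else ∅, fun Q hQ => ?_, fun Q hQ Q' hQ' hne => ?_⟩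
  · have hex : ∃ z : ℤ, Q ∈ S z := Set.mem_iUnion.1 hQ
    simp only [dif_pos hex]
    exact ⟨Set.diff_subset, key3 _ Q (hK Q hex)⟩
  · have hex : ∃ z : ℤ, Q ∈ S z := Set.mem_iUnion.1 hQ
    have hex' : ∃ z : ℤ, Q' ∈ S z := Set.mem_iUnion.1 hQ'
    simp only [dif_pos hex, dif_pos hex']
    exact key2 _ _ Q (hK Q hex) Q' (hK Q' hex') (fun h => hne (congrArg Prod.snd h))


end
end

section
/- Let 𝒟 be a dyadic grid in ℝ^n, let p_1,p_2>1, 1<m_1≤p_1, 1<m_2≤p_2, let a_1,a_2≥0 be integers, and let f,g be nonnegative, bounded, compactly supported functions on ℝ^n. For each k∈ℤ, let {Q_{k,j}}_j be the collection of cubes of 𝒟 that are maximal with respect to the property ‖f‖_{L^{p_1/m_1}(log L)^{(p_1/m_1)a_1},Q}·‖g‖_{L^{p_2/m_2}(log L)^{(p_2/m_2)a_2},Q} > 4^{(n+2)k}. Then for every k and j, |Q_{k,j} ∩ ⋃_i Q_{k+1,i}| ≤ |Q_{k,j}|/2; consequently, setting E_{k,j}=Q_{k,j}∖⋃_i Q_{k+1,i},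 the sets {E_{k,j}}_{k,j} are pairwise disjoint, |Q_{k,j}|≤2|E_{k,j}|, and the family {Q_{k,j}}_{k,j} is sparse. -/
open MeasureTheory ENNReal Set Filter

noncomputable section

namespace Cube
variable {n : ℕ}

theorem ext' {P R : Cube n} (hc : P.corner = R.corner) (hs : P.side = R.side) : P = R := by
  cases P; cases R; simp_all

theorem vol_pos (Q : Cube n) : 0 < Q.vol := pow_pos Q.side_pos n

def pt (Q : Cube n) : Euc n := WithLp.toLp 2 Q.corner

theorem pt_mem (Q : Cube n) : Q.pt ∈ Q.set := by
  intro i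
  exact ⟨le_refl _, by have := Q.side_pos; show Q.corner i < _; linarith⟩

theorem set_eq_preimage (Q : Cube n) :
    Q.set = (MeasurableEquiv.toLp 2 (Fin n → ℝ)).symm ⁻¹'
      (Set.univ.pi fun i => Set.Ico (Q.corner i) (Q.corner i + Q.side)) := by
  ext x
  simp only [Set.mem_preimage, Set.mem_univ_pi, Set.mem_Ico]
  rfl

theorem measurableSet_set (Q : Cube n) : MeasurableSet Q.set := by
  rw [set_eq_preimage]
  exact (MeasurableEquiv.toLp 2 (Fin n → ℝ)).symm.measurable
    (MeasurableSet.univ_pi fun i => measurableSet_Ico)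

theorem volume_set (Q : Cube n) : volume Q.set = ENNReal.ofReal Q.vol := by
  rw [set_eq_preimage,
    (EuclideanSpace.volume_preserving_symm_measurableEquiv_toLp (Fin n)).measure_preimage
      (MeasurableSet.univ_pi fun i => measurableSet_Ico).nullMeasurableSet,
    volume_pi_pi]
  simp only [Real.volume_Ico, add_sub_cancel_left]
  rw [Finset.prod_const, Cube.vol, ← ENNReal.ofReal_pow Q.side_pos.le]
  simp

theorem volume_set_lt_top (Q : Cube n) : volume Q.set < ⊤ := by
  rw [volume_set]; exact ENNReal.ofReal_lt_top

theorem corner_bounds {P R : Cube n} (h : P.set ⊆ R.set) (i : Fin n) :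
    R.corner i ≤ P.corner i ∧ P.corner i + P.side ≤ R.corner i + R.side := by
  constructor
  · exact (h P.pt_mem i).1
  · refine le_of_forall_pos_le_add fun ε hε => ?_
    set δ := min ε P.side with hδ
    have hδ0 : 0 < δ := lt_min hε P.side_pos
    have hδs : δ ≤ P.side := min_le_right _ _
    have hδε : δ ≤ ε := min_le_left _ _
    set x : Euc n := WithLp.toLp 2 (fun j => if j = i then P.corner i + P.side - δ / 2 else P.corner j) with hx
    have hxP : x ∈ P.set := by
      intro j
      by_cases hj : j = i
      · subst hj
        simp only [hx, WithLp.ofLp_toLp, if_pos rfl, ↓reduceIte]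
        constructor <;> [linarith; linarith [P.side_pos]]
      · simp only [hx, WithLp.ofLp_toLp, if_neg hj]
        exact ⟨le_refl _, by linarith [P.side_pos]⟩
    have hxR := h hxP i
    have : P.corner i + P.side - δ / 2 < R.corner i + R.side := by
      have := hxR.2
      simpa [hx] using this
    linarith

theorem side_le_side (hn : 0 < n) {P R : Cube n} (h : P.set ⊆ R.set) : P.side ≤ R.side := by
  obtain ⟨h1, h2⟩ := corner_bounds h ⟨0, hn⟩
  linarith

theorem vol_le_vol (hn : 0 < n) {P R : Cube n} (h : P.set ⊆ R.set) : P.vol ≤ R.vol :=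
  pow_le_pow_left₀ P.side_pos.le (side_le_side hn h) n

theorem subset_rigid (hn : 0 < n) {P R : Cube n} (h : P.set ⊆ R.set) (hs : R.side ≤ P.side) :
    R = P := by
  have hside : P.side = R.side := le_antisymm (side_le_side hn h) hs
  refine ext' ?_ hside.symm
  funext i
  obtain ⟨h1, h2⟩ := corner_bounds h i
  have : P.corner i ≤ R.corner i := by linarith [hside]
  linarith [le_antisymm h1 this]

end Cube
section Grid
variable {n : ℕ} {𝒟 : Set (Cube n)}

theorem grid_nested (h𝒟 : IsDyadicGrid 𝒟) {P R : Cube n} (hP : P ∈ 𝒟) (hR : R ∈ 𝒟)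
    {x : Euc n} (hxP : x ∈ P.set) (hxR : x ∈ R.set) : P.set ⊆ R.set ∨ R.set ⊆ P.set := by
  rcases h𝒟.2.2.2 P hP R hR with h | h | h
  · exact absurd (Set.mem_inter hxP hxR) (h ▸ Set.notMem_empty x)
  · exact Or.inl h
  · exact Or.inr h

/-- unique ancestor at each level `j ≥ k` -/
theorem grid_ancestor (hn : 0 < n) (h𝒟 : IsDyadicGrid 𝒟) {Q : Cube n} (hQ : Q ∈ 𝒟)
    {k j : ℤ} (hk : Q.side = 2 ^ k) (hj : k ≤ j) :
    ∃ R ∈ 𝒟, R.side = 2 ^ j ∧ Q.set ⊆ R.set ∧ Q.pt ∈ R.set := by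
  obtain ⟨R, ⟨hR𝒟, hRs, hRx⟩, -⟩ := h𝒟.2.2.1 j Q.pt
  refine ⟨R, hR𝒟, hRs, ?_, hRx⟩
  rcases grid_nested h𝒟 hQ hR𝒟 Q.pt_mem hRx with h | h
  · exact h
  · have hs : R.side ≤ Q.side := Cube.side_le_side hn h
    have : Q.side ≤ R.side := by
      rw [hk, hRs]
      exact zpow_le_zpow_right₀ one_le_two hj
    rw [Cube.subset_rigid hn h this]

theorem grid_level_eq (h𝒟 : IsDyadicGrid 𝒟) {R : Cube n} (hR : R ∈ 𝒟) {j : ℤ}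
    (hRs : R.side = 2 ^ j) {x : Euc n} (hx : x ∈ R.set)
    {R' : Cube n} (hR' : R' ∈ 𝒟) (hR's : R'.side = 2 ^ j) (hx' : x ∈ R'.set) : R = R' := by
  obtain ⟨P, -, hu⟩ := h𝒟.2.2.1 j x
  rw [hu R ⟨hR, hRs, hx⟩, hu R' ⟨hR', hR's, hx'⟩]

end Grid
section Phi
variable {r s : ℝ}

/-- the explicit Young functions used in the statement -/
def phiRS (r s : ℝ) : ℝ → ℝ := fun t => t ^ r * Real.log (1 + t) ^ s

theorem phiRS_zero (hr : 1 ≤ r) : phiRS r s 0 = 0 := by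
  simp [phiRS, Real.zero_rpow (by linarith : r ≠ 0)]

theorem phiRS_nonneg {t : ℝ} (ht : 0 ≤ t) : 0 ≤ phiRS r s t :=
  mul_nonneg (Real.rpow_nonneg ht r)
    (Real.rpow_nonneg (Real.log_nonneg (by linarith)) s)

theorem phiRS_mono (hr : 1 ≤ r) (hs : 0 ≤ s) {a b : ℝ} (ha : 0 ≤ a) (hab : a ≤ b) :
    phiRS r s a ≤ phiRS r s b := by
  have hb : 0 ≤ b := ha.trans hab
  have h1 : a ^ r ≤ b ^ r := Real.rpow_le_rpow ha hab (by linarith)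
  have h2 : Real.log (1 + a) ≤ Real.log (1 + b) :=
    Real.log_le_log (by linarith) (by linarith)
  have h3 : Real.log (1 + a) ^ s ≤ Real.log (1 + b) ^ s :=
    Real.rpow_le_rpow (Real.log_nonneg (by linarith)) h2 hs
  exact mul_le_mul h1 h3 (Real.rpow_nonneg (Real.log_nonneg (by linarith)) s)
    (Real.rpow_nonneg hb r)

theorem phiRS_scale (hr : 1 ≤ r) (hs : 0 ≤ s) {t c : ℝ} (ht : 0 ≤ t) (hc : 1 ≤ c) :
    phiRS r s (t / c) ≤ phiRS r s t / c := by
  have hc0 : (0:ℝ) < c := by linarith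
  have h1 : (t / c) ^ r = t ^ r / c ^ r := Real.div_rpow ht hc0.le r
  have hcr : c ≤ c ^ r := by
    calc c = c ^ (1:ℝ) := (Real.rpow_one c).symm
    _ ≤ c ^ r := Real.rpow_le_rpow_of_exponent_le hc hr
  have h2 : t ^ r / c ^ r ≤ t ^ r / c :=
    div_le_div_of_nonneg_left (Real.rpow_nonneg ht r) hc0 hcr
  have h3 : Real.log (1 + t / c) ^ s ≤ Real.log (1 + t) ^ s := by
    have hdt : 0 ≤ t / c := div_nonneg ht hc0.le
    refine Real.rpow_le_rpow (Real.log_nonneg (by linarith)) ?_ hs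
    refine Real.log_le_log (by linarith) ?_
    have := div_le_self ht hc
    linarith
  calc phiRS r s (t / c) = (t/c) ^ r * Real.log (1 + t/c) ^ s := rfl
  _ ≤ (t ^ r / c) * Real.log (1 + t) ^ s := by
      rw [h1]
      exact mul_le_mul h2 h3 (Real.rpow_nonneg (Real.log_nonneg (by
          have hdt : 0 ≤ t / c := div_nonneg ht hc0.le; linarith)) s)
        (by positivity)
  _ = phiRS r s t / c := by rw [phiRS]; ring

theorem phiRS_small (hr : 1 ≤ r) (hs : 0 ≤ s) {t : ℝ} (ht : 0 ≤ t) (ht1 : t ≤ 1) :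
    phiRS r s t ≤ t := by
  have h1 : t ^ r ≤ t := by
    rcases eq_or_lt_of_le ht with h | h
    · rw [← h, Real.zero_rpow (by linarith : r ≠ 0)]
    · calc t ^ r ≤ t ^ (1:ℝ) := Real.rpow_le_rpow_of_exponent_ge h ht1 hr
      _ = t := Real.rpow_one t
  have h2 : Real.log (1 + t) ^ s ≤ 1 := by
    refine Real.rpow_le_one (Real.log_nonneg (by linarith)) ?_ hs
    calc Real.log (1 + t) ≤ (1 + t) - 1 := Real.log_le_sub_one_of_pos (by linarith)
    _ ≤ 1 := by linarith
  calc phiRS r s t ≤ t ^ r * 1 :=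
    mul_le_mul_of_nonneg_left h2 (Real.rpow_nonneg ht r)
  _ = t ^ r := mul_one _
  _ ≤ t := h1

theorem rpow_const_continuous (hr : 0 ≤ r) : Continuous fun t : ℝ => t ^ r := by
  rcases eq_or_lt_of_le hr with h | h
  · simp only [← h, Real.rpow_zero]; exact continuous_const
  · exact continuous_iff_continuousAt.2 fun x => Real.continuousAt_rpow_const x r (Or.inr hr)

theorem phiRS_measurable (hr : 1 ≤ r) (hs : 0 ≤ s) : Measurable (phiRS r s) := by
  refine Measurable.mul ((rpow_const_continuous (by linarith)).measurable) ?_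
  exact ((rpow_const_continuous hs).measurable).comp
    (Real.measurable_log.comp (measurable_const.add measurable_id))

theorem phiRS_contOn (hr : 1 ≤ r) (hs : 0 ≤ s) {u : ℝ} (hu : 0 ≤ u) :
    ContinuousOn (fun lam => phiRS r s (u / lam)) (Set.Ioi 0) := by
  have hq : ContinuousOn (fun lam : ℝ => u / lam) (Set.Ioi 0) :=
    continuousOn_const.div continuousOn_id fun x hx => ne_of_gt hx
  refine ContinuousOn.mul (hq.rpow_const fun x hx => Or.inr (by linarith)) ?_
  refine ContinuousOn.rpow_const ?_ fun x hx => Or.inr hs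
  exact Real.continuousOn_log.comp (continuousOn_const.add hq) fun x hx => by
    have : 0 ≤ u / x := div_nonneg hu (le_of_lt hx)
    intro h
    have : (1 : ℝ) + u / x = 0 := h
    linarith

end Phi
section OrliczMachine
variable {n : ℕ}

structure PhiData (Φ : ℝ → ℝ) : Prop where
  zero : Φ 0 = 0
  nonneg : ∀ t, 0 ≤ t → 0 ≤ Φ t
  mono : ∀ a b, 0 ≤ a → a ≤ b → Φ a ≤ Φ b
  scale : ∀ t c, 0 ≤ t → 1 ≤ c → Φ (t / c) ≤ Φ t / c
  small : ∀ t, 0 ≤ t → t ≤ 1 → Φ t ≤ t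
  meas : Measurable Φ
  contOn : ∀ u, 0 ≤ u → ContinuousOn (fun lam => Φ (u / lam)) (Set.Ioi 0)

theorem phiRS_data {r s : ℝ} (hr : 1 ≤ r) (hs : 0 ≤ s) : PhiData (phiRS r s) :=
  ⟨phiRS_zero hr, fun _ ht => phiRS_nonneg ht, fun _ _ ha hab => phiRS_mono hr hs ha hab,
   fun _ _ ht hc => phiRS_scale hr hs ht hc, fun _ ht ht1 => phiRS_small hr hs ht ht1,
   phiRS_measurable hr hs, fun _ hu => phiRS_contOn hr hs hu⟩

structure FData {n : ℕ} (f : Euc n → ℝ) (C : ℝ) : Prop where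
  meas : Measurable f
  nonneg : ∀ x, 0 ≤ f x
  le : ∀ x, f x ≤ C
  C0 : 0 ≤ C
  supp : HasCompactSupport f

variable {Φ : ℝ → ℝ} {f : Euc n → ℝ} {C : ℝ}

def oSet (Φ : ℝ → ℝ) (Q : Cube n) (f : Euc n → ℝ) : Set ℝ :=
  {lam | 0 < lam ∧ (∫ x in Q.set, Φ (|f x| / lam)) / Q.vol ≤ 1}

theorem orliczAvg_eq_sInf (Φ : ℝ → ℝ) (Q : Cube n) (f : Euc n → ℝ) :
    orliczAvg Φ Q f = sInf (oSet Φ Q f) := rfl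

theorem abs_f_le (hF : FData f C) (x : Euc n) : |f x| ≤ C := by
  rw [abs_of_nonneg (hF.nonneg x)]; exact hF.le x

theorem oInt_integrableOn (hPhi : PhiData Φ) (hF : FData f C) (Q : Cube n) {lam : ℝ}
    (hlam : 0 < lam) : IntegrableOn (fun x => Φ (|f x| / lam)) Q.set := by
  refine Integrable.mono' (g := fun _ => Φ (C / lam))
    (integrableOn_const Q.volume_set_lt_top.ne) ?_ ?_
  · exact ((hPhi.meas.comp ((hF.meas.abs).div_const lam)).aestronglyMeasurable)
  · refine Filter.Eventually.of_forall fun x => ?_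
    rw [Real.norm_eq_abs, abs_of_nonneg (hPhi.nonneg _ (div_nonneg (abs_nonneg _) hlam.le))]
    exact hPhi.mono _ _ (div_nonneg (abs_nonneg _) hlam.le)
      ((div_le_div_iff_of_pos_right hlam).2 (abs_f_le hF x))

theorem oInt_le_vol_mul (hPhi : PhiData Φ) (hF : FData f C) (Q : Cube n) {lam : ℝ}
    (hlam : 0 < lam) :
    (∫ x in Q.set, Φ (|f x| / lam)) ≤ Φ (C / lam) * Q.vol := by
  calc (∫ x in Q.set, Φ (|f x| / lam)) ≤ ∫ _x in Q.set, Φ (C / lam) := by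
        refine integral_mono (oInt_integrableOn hPhi hF Q hlam)
          (integrableOn_const Q.volume_set_lt_top.ne) fun x => ?_
        exact hPhi.mono _ _ (div_nonneg (abs_nonneg _) hlam.le) ((div_le_div_iff_of_pos_right hlam).2 (abs_f_le hF x))
  _ = Φ (C / lam) * Q.vol := by
        rw [setIntegral_const, measureReal_def, Q.volume_set, ENNReal.toReal_ofReal Q.vol_pos.le, smul_eq_mul,
          mul_comm]

theorem oInt_le_supp_mul (hPhi : PhiData Φ) (hF : FData f C) (Q : Cube n) {lam : ℝ}
    (hlam : 0 < lam) :
    (∫ x in Q.set, Φ (|f x| / lam)) ≤ Φ (C / lam) * (volume (tsupport f)).toReal := by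
  have hKmeas : MeasurableSet (tsupport f) := (isClosed_tsupport f).measurableSet
  have hKfin : volume (tsupport f) < ⊤ := hF.supp.measure_lt_top
  have hind : Integrable ((tsupport f).indicator fun _ => Φ (C / lam)) := by
    rw [integrable_indicator_iff hKmeas]
    exact integrableOn_const hKfin.ne
  calc (∫ x in Q.set, Φ (|f x| / lam))
      ≤ ∫ x in Q.set, (tsupport f).indicator (fun _ => Φ (C / lam)) x := by
        refine integral_mono (oInt_integrableOn hPhi hF Q hlam) hind.integrableOn fun x => ?_
        by_cases hx : x ∈ tsupport f
        · rw [Set.indicator_of_mem hx]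
          exact hPhi.mono _ _ (div_nonneg (abs_nonneg _) hlam.le) ((div_le_div_iff_of_pos_right hlam).2 (abs_f_le hF x))
        · rw [Set.indicator_of_notMem hx, image_eq_zero_of_notMem_tsupport hx]
          simp [hPhi.zero]
  _ ≤ ∫ x, (tsupport f).indicator (fun _ => Φ (C / lam)) x := by
        refine setIntegral_le_integral hind (Filter.Eventually.of_forall fun x => ?_)
        exact Set.indicator_nonneg (fun _ _ => hPhi.nonneg _ (div_nonneg hF.C0 hlam.le)) x
  _ = Φ (C / lam) * (volume (tsupport f)).toReal := by
        rw [integral_indicator_const _ hKmeas, smul_eq_mul, mul_comm]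
        rfl

theorem mem_oSet_iff (Q : Cube n) {lam : ℝ} :
    lam ∈ oSet Φ Q f ↔ 0 < lam ∧ (∫ x in Q.set, Φ (|f x| / lam)) ≤ Q.vol := by
  unfold oSet
  simp only [Set.mem_setOf_eq, div_le_one Q.vol_pos]

theorem oSet_nonempty (hPhi : PhiData Φ) (hF : FData f C) (Q : Cube n) :
    (oSet Φ Q f).Nonempty := by
  refine ⟨max 1 C, (mem_oSet_iff Q).2 ⟨lt_of_lt_of_le one_pos (le_max_left _ _), ?_⟩⟩
  have h1 : (0:ℝ) < max 1 C := lt_of_lt_of_le one_pos (le_max_left _ _)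
  have h2 : C / max 1 C ≤ 1 := div_le_one_of_le₀ (le_max_right _ _) h1.le
  calc (∫ x in Q.set, Φ (|f x| / max 1 C)) ≤ Φ (C / max 1 C) * Q.vol :=
        oInt_le_vol_mul hPhi hF Q h1
  _ ≤ 1 * Q.vol := by
        refine mul_le_mul_of_nonneg_right ?_ Q.vol_pos.le
        exact le_trans (hPhi.small _ (div_nonneg hF.C0 h1.le) h2) h2
  _ = Q.vol := one_mul _

theorem oSet_bddBelow (Q : Cube n) : BddBelow (oSet Φ Q f) :=
  ⟨0, fun lam hlam => le_of_lt hlam.1⟩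

theorem orliczAvg_nonneg (Q : Cube n) : 0 ≤ orliczAvg Φ Q f :=
  Real.sInf_nonneg fun lam hlam => le_of_lt hlam.1

theorem oSet_upward (hPhi : PhiData Φ) (hF : FData f C) (Q : Cube n) {lam lam' : ℝ}
    (h : lam ∈ oSet Φ Q f) (hle : lam ≤ lam') : lam' ∈ oSet Φ Q f := by
  rw [mem_oSet_iff] at h ⊢
  have h0' : 0 < lam' := lt_of_lt_of_le h.1 hle
  refine ⟨h0', le_trans ?_ h.2⟩
  refine integral_mono (oInt_integrableOn hPhi hF Q h0') (oInt_integrableOn hPhi hF Q h.1)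
    fun x => ?_
  exact hPhi.mono _ _ (div_nonneg (abs_nonneg _) h0'.le)
    (div_le_div_of_nonneg_left (abs_nonneg _) h.1 hle)

theorem mem_oSet_of_avg_lt (hPhi : PhiData Φ) (hF : FData f C) (Q : Cube n) {lam : ℝ}
    (h : orliczAvg Φ Q f < lam) : lam ∈ oSet Φ Q f := by
  obtain ⟨a, ha, halt⟩ := exists_lt_of_csInf_lt (oSet_nonempty hPhi hF Q) h
  exact oSet_upward hPhi hF Q ha halt.le

theorem vol_lt_oInt (hPhi : PhiData Φ) (hF : FData f C) (Q : Cube n) {lam : ℝ}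
    (h0 : 0 < lam) (h : lam < orliczAvg Φ Q f) :
    Q.vol < ∫ x in Q.set, Φ (|f x| / lam) := by
  by_contra hcon
  push_neg at hcon
  have : lam ∈ oSet Φ Q f := (mem_oSet_iff Q).2 ⟨h0, hcon⟩
  exact absurd (csInf_le (oSet_bddBelow Q) this) (not_le.2 h)

theorem oInt_avg_le (hPhi : PhiData Φ) (hF : FData f C) (Q : Cube n)
    (hA : 0 < orliczAvg Φ Q f) :
    (∫ x in Q.set, Φ (|f x| / orliczAvg Φ Q f)) ≤ Q.vol := by
  set A := orliczAvg Φ Q f with hAdef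
  set lamSeq : ℕ → ℝ := fun m => A + ((m : ℝ) + 1)⁻¹ with hlam
  have hlam_pos : ∀ m : ℕ, A < lamSeq m := fun m => by
    have : (0:ℝ) < ((m:ℝ) + 1)⁻¹ := by positivity
    simp only [hlam]; linarith
  have hmem : ∀ m, lamSeq m ∈ oSet Φ Q f := fun m =>
    mem_oSet_of_avg_lt hPhi hF Q (hlam_pos m)
  have htend : Filter.Tendsto lamSeq Filter.atTop (nhds A) := by
    have : Filter.Tendsto (fun m : ℕ => 1 / ((m:ℝ) + 1)) Filter.atTop (nhds 0) :=
      tendsto_one_div_add_atTop_nhds_zero_nat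
    have := Filter.Tendsto.const_add A this
    simpa [one_div] using this
  have key : Filter.Tendsto (fun m => ∫ x in Q.set, Φ (|f x| / lamSeq m)) Filter.atTop
      (nhds (∫ x in Q.set, Φ (|f x| / A))) := by
    refine tendsto_integral_of_dominated_convergence (fun _ => Φ (C / A))
      (fun m => ((hPhi.meas.comp ((hF.meas.abs).div_const _)).aestronglyMeasurable))
      (integrableOn_const Q.volume_set_lt_top.ne) (fun m => ?_) ?_
    · refine Filter.Eventually.of_forall fun x => ?_
      rw [Real.norm_eq_abs, abs_of_nonneg (hPhi.nonneg _ (by positivity))]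
      refine hPhi.mono _ _ (div_nonneg (abs_nonneg _) (le_of_lt (lt_of_le_of_lt hA.le (hlam_pos m)))) ?_
      calc |f x| / lamSeq m ≤ |f x| / A :=
            div_le_div_of_nonneg_left (abs_nonneg _) hA (hlam_pos m).le
      _ ≤ C / A := (div_le_div_iff_of_pos_right hA).2 (abs_f_le hF x)
    · refine Filter.Eventually.of_forall fun x => ?_
      have hc : ContinuousAt (fun lam => Φ (|f x| / lam)) A :=
        (hPhi.contOn _ (abs_nonneg (f x))).continuousAt (isOpen_Ioi.mem_nhds hA)
      exact hc.tendsto.comp htend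
  refine le_of_tendsto key (Filter.Eventually.of_forall fun m => ?_)
  exact ((mem_oSet_iff Q).1 (hmem m)).2

theorem orliczAvg_le_of_subset (hn : 0 < n) (hPhi : PhiData Φ) (hF : FData f C)
    {P R : Cube n} (h : P.set ⊆ R.set) :
    orliczAvg Φ P f ≤ (R.vol / P.vol) * orliczAvg Φ R f := by
  set c := R.vol / P.vol with hc
  have hc1 : 1 ≤ c := (one_le_div P.vol_pos).2 (Cube.vol_le_vol hn h)
  have hc0 : 0 < c := lt_of_lt_of_le one_pos hc1
  have hmem : ∀ lam ∈ oSet Φ R f, c * lam ∈ oSet Φ P f := by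
    intro lam hlam
    obtain ⟨hl0, hint⟩ := (mem_oSet_iff R).1 hlam
    refine (mem_oSet_iff P).2 ⟨by positivity, ?_⟩
    have hpt : ∀ x : Euc n, Φ (|f x| / (c * lam)) ≤ Φ (|f x| / lam) / c := fun x => by
      have heq : |f x| / (c * lam) = (|f x| / lam) / c := by
        rw [div_div, mul_comm c lam]
      rw [heq]
      exact hPhi.scale _ _ (div_nonneg (abs_nonneg _) hl0.le) hc1
    calc (∫ x in P.set, Φ (|f x| / (c * lam)))
        ≤ ∫ x in P.set, Φ (|f x| / lam) / c := by
          refine integral_mono (oInt_integrableOn hPhi hF P (by positivity))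
            ((oInt_integrableOn hPhi hF P hl0).div_const c) hpt
    _ = (∫ x in P.set, Φ (|f x| / lam)) / c := integral_div c _
    _ ≤ (∫ x in R.set, Φ (|f x| / lam)) / c := by
          refine (div_le_div_iff_of_pos_right hc0).2 ?_
          refine setIntegral_mono_set (oInt_integrableOn hPhi hF R hl0) ?_
            (HasSubset.Subset.eventuallyLE h)
          exact Filter.Eventually.of_forall fun x =>
            hPhi.nonneg _ (div_nonneg (abs_nonneg _) hl0.le)
    _ ≤ R.vol / c := (div_le_div_iff_of_pos_right hc0).2 hint
    _ = P.vol := by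
          rw [hc, div_div_eq_mul_div, mul_comm, mul_div_assoc, div_self R.vol_pos.ne', mul_one]
  have h1 : ∀ lam ∈ oSet Φ R f, orliczAvg Φ P f / c ≤ lam := fun lam hlam => by
    rw [div_le_iff₀ hc0]
    calc orliczAvg Φ P f ≤ c * lam := csInf_le (oSet_bddBelow P) (hmem lam hlam)
    _ = lam * c := mul_comm _ _
  have h2 : orliczAvg Φ P f / c ≤ orliczAvg Φ R f :=
    le_csInf (oSet_nonempty hPhi hF R) h1
  calc orliczAvg Φ P f = c * (orliczAvg Φ P f / c) := by field_simp
  _ ≤ c * orliczAvg Φ R f := mul_le_mul_of_nonneg_left h2 hc0.le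

theorem orliczAvg_le_of_big (hPhi : PhiData Φ) (hF : FData f C) (Q : Cube n) {δ : ℝ}
    (hδ : 0 < δ) (h : Φ (C / δ) * (volume (tsupport f)).toReal ≤ Q.vol) :
    orliczAvg Φ Q f ≤ δ := by
  refine csInf_le (oSet_bddBelow Q) ((mem_oSet_iff Q).2 ⟨hδ, ?_⟩)
  exact le_trans (oInt_le_supp_mul hPhi hF Q hδ) h

end OrliczMachine
theorem stmt17 {n : ℕ} (hn : 0 < n) {p₁ p₂ m₁ m₂ : ℝ}
    (hp₁ : 1 < p₁) (hp₂ : 1 < p₂)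
    (hm₁ : 1 < m₁) (hm₁' : m₁ ≤ p₁) (hm₂ : 1 < m₂) (hm₂' : m₂ ≤ p₂)
    (a₁ a₂ : ℕ)
    (𝒟 : Set (Cube n)) (h𝒟 : IsDyadicGrid 𝒟)
    (f g : Euc n → ℝ) (hf : Measurable f) (hg : Measurable g)
    (hf0 : ∀ x, 0 ≤ f x) (hg0 : ∀ x, 0 ≤ g x)
    (hfb : ∃ Cf : ℝ, ∀ x, f x ≤ Cf) (hgb : ∃ Cg : ℝ, ∀ x, g x ≤ Cg)
    (hfc : HasCompactSupport f) (hgc : HasCompactSupport g)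
    (S : ℤ → Set (Cube n))
    (hS : ∀ (k : ℤ) (Q : Cube n), Q ∈ S k ↔
      Q ∈ 𝒟 ∧ (4 : ℝ) ^ (((n : ℝ) + 2) * (k : ℝ)) < orliczAvg (fun t => t ^ (p₁ / m₁) * Real.log (1 + t) ^ ((p₁ / m₁) * (a₁ : ℝ))) Q f * orliczAvg (fun t => t ^ (p₂ / m₂) * Real.log (1 + t) ^ ((p₂ / m₂) * (a₂ : ℝ))) Q g ∧
        ∀ R ∈ 𝒟, (4 : ℝ) ^ (((n : ℝ) + 2) * (k : ℝ)) < orliczAvg (fun t => t ^ (p₁ / m₁) * Real.log (1 + t) ^ ((p₁ / m₁) * (a₁ : ℝ))) R f * orliczAvg (fun t => t ^ (p₂ / m₂) * Real.log (1 + t) ^ ((p₂ / m₂) * (a₂ : ℝ))) R g →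
          Q.set ⊆ R.set → R = Q) :
    (∀ k : ℤ, ∀ Q ∈ S k,
      volume (Q.set ∩ ⋃ P ∈ S (k + 1), Cube.set P) ≤ ENNReal.ofReal Q.vol / 2) ∧
    (∀ k k' : ℤ, ∀ Q ∈ S k, ∀ Q' ∈ S k', (k, Q) ≠ (k', Q') →
      Disjoint (Q.set \ ⋃ P ∈ S (k + 1), Cube.set P)
        (Q'.set \ ⋃ P ∈ S (k' + 1), Cube.set P)) ∧
    (∀ k : ℤ, ∀ Q ∈ S k,
      ENNReal.ofReal Q.vol ≤ 2 * volume (Q.set \ ⋃ P ∈ S (k + 1), Cube.set P)) ∧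
    IsSparse (⋃ k : ℤ, S k) := by
  classical
  obtain ⟨Cf, hCf⟩ := hfb
  obtain ⟨Cg, hCg⟩ := hgb
  set Φ₁ : ℝ → ℝ := fun t => t ^ (p₁ / m₁) * Real.log (1 + t) ^ ((p₁ / m₁) * (a₁ : ℝ))
    with hΦ₁def
  set Φ₂ : ℝ → ℝ := fun t => t ^ (p₂ / m₂) * Real.log (1 + t) ^ ((p₂ / m₂) * (a₂ : ℝ))
    with hΦ₂def
  have hm₁0 : (0:ℝ) < m₁ := by linarith
  have hm₂0 : (0:ℝ) < m₂ := by linarith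
  have hr₁ : 1 ≤ p₁ / m₁ := (one_le_div hm₁0).2 hm₁'
  have hr₂ : 1 ≤ p₂ / m₂ := (one_le_div hm₂0).2 hm₂'
  have hs₁ : 0 ≤ (p₁ / m₁) * (a₁ : ℝ) := mul_nonneg (by linarith) (Nat.cast_nonneg _)
  have hs₂ : 0 ≤ (p₂ / m₂) * (a₂ : ℝ) := mul_nonneg (by linarith) (Nat.cast_nonneg _)
  have hP₁ : PhiData Φ₁ := phiRS_data hr₁ hs₁
  have hP₂ : PhiData Φ₂ := phiRS_data hr₂ hs₂
  set C₁ : ℝ := max Cf 0 with hC₁def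
  set C₂ : ℝ := max Cg 0 with hC₂def
  have hF₁ : FData f C₁ := ⟨hf, hf0, fun x => le_max_of_le_left (hCf x), le_max_right _ _, hfc⟩
  have hF₂ : FData g C₂ := ⟨hg, hg0, fun x => le_max_of_le_left (hCg x), le_max_right _ _, hgc⟩
  set T : ℤ → ℝ := fun k => (4 : ℝ) ^ (((n : ℝ) + 2) * (k : ℝ)) with hTdef
  set av₁ : Cube n → ℝ := fun Q => orliczAvg Φ₁ Q f with hav₁def
  set av₂ : Cube n → ℝ := fun Q => orliczAvg Φ₂ Q g with hav₂def
  have hSmem : ∀ (k : ℤ) (Q : Cube n), Q ∈ S k ↔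
      Q ∈ 𝒟 ∧ T k < av₁ Q * av₂ Q ∧
        ∀ R ∈ 𝒟, T k < av₁ R * av₂ R → Q.set ⊆ R.set → R = Q := hS
  clear hS
  -- basic facts about T
  have hT_pos : ∀ k, 0 < T k := fun k => Real.rpow_pos_of_pos (by norm_num) _
  have hT_mono : ∀ {k k' : ℤ}, k ≤ k' → T k ≤ T k' := by
    intro k k' hkk
    refine Real.rpow_le_rpow_of_exponent_le (by norm_num) ?_
    have : (k : ℝ) ≤ (k' : ℝ) := by exact_mod_cast hkk
    nlinarith [Nat.cast_nonneg (α := ℝ) n]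
  set c₀ : ℝ := 2 ^ (n + 2) with hc₀def
  have hc₀1 : (1:ℝ) ≤ c₀ := one_le_pow₀ one_le_two
  have hc₀0 : (0:ℝ) < c₀ := lt_of_lt_of_le one_pos hc₀1
  have hT_succ : ∀ k : ℤ, T (k + 1) = T k * (c₀ * c₀) := by
    intro k
    have h1 : ((n : ℝ) + 2) * ((k + 1 : ℤ) : ℝ) = ((n:ℝ) + 2) * (k:ℝ) + ((n:ℝ) + 2) := by
      push_cast; ring
    rw [hTdef]
    simp only []
    rw [h1, Real.rpow_add (by norm_num : (0:ℝ) < 4)]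
    congr 1
    have h2 : (4:ℝ) ^ ((n:ℝ) + 2) = (4:ℝ) ^ ((n + 2 : ℕ) : ℝ) := by push_cast; ring_nf
    rw [h2, Real.rpow_natCast, hc₀def, show (4:ℝ) = 2 * 2 by norm_num, mul_pow]
  have h4n_lt : (2:ℝ)^n * (2:ℝ)^n < c₀ * c₀ := by
    have h1 : (2:ℝ)^n < c₀ := by
      rw [hc₀def]
      exact pow_lt_pow_right₀ one_lt_two (by omega)
    have h2 : (0:ℝ) < (2:ℝ)^n := by positivity
    nlinarith
  -- avg nonneg
  have hav₁nn : ∀ Q : Cube n, 0 ≤ av₁ Q := fun Q => orliczAvg_nonneg Q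
  have hav₂nn : ∀ Q : Cube n, 0 ≤ av₂ Q := fun Q => orliczAvg_nonneg Q
  -- parent cube
  have hparent : ∀ Q ∈ 𝒟, ∃ R ∈ 𝒟, Q.set ⊆ R.set ∧ Q.side < R.side ∧ R.vol = 2^n * Q.vol := by
    intro Q hQ
    obtain ⟨j, hj⟩ := h𝒟.2.1 Q hQ
    obtain ⟨R, hR𝒟, hRs, hRsub, -⟩ := grid_ancestor hn h𝒟 hQ hj (le_of_lt (lt_add_one j))
    refine ⟨R, hR𝒟, hRsub, ?_, ?_⟩
    · rw [hj, hRs]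
      exact zpow_lt_zpow_right₀ one_lt_two (lt_add_one j)
    · rw [Cube.vol, Cube.vol, hj, hRs, zpow_add_one₀ (by norm_num : (2:ℝ) ≠ 0)]
      ring
  -- product bound on members of S k
  have hQbound : ∀ (k : ℤ), ∀ Q ∈ S k, av₁ Q * av₂ Q ≤ ((2:ℝ)^n * (2:ℝ)^n) * T k := by
    intro k Q hQ
    obtain ⟨hQ𝒟, hQp, hQmax⟩ := (hSmem k Q).1 hQ
    obtain ⟨R, hR𝒟, hRsub, hRside, hRvol⟩ := hparent Q hQ𝒟
    have hRfail : ¬ T k < av₁ R * av₂ R := by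
      intro hcon
      have := hQmax R hR𝒟 hcon hRsub
      rw [this] at hRside
      exact lt_irrefl _ hRside
    have hratio : R.vol / Q.vol = 2^n := by
      rw [hRvol, mul_div_assoc, div_self Q.vol_pos.ne', mul_one]
    have h1 : av₁ Q ≤ 2^n * av₁ R := by
      have := orliczAvg_le_of_subset hn hP₁ hF₁ hRsub
      rwa [hratio] at this
    have h2 : av₂ Q ≤ 2^n * av₂ R := by
      have := orliczAvg_le_of_subset hn hP₂ hF₂ hRsub
      rwa [hratio] at this
    have h3 : av₁ Q * av₂ Q ≤ (2^n * av₁ R) * (2^n * av₂ R) :=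
      mul_le_mul h1 h2 (hav₂nn Q) (mul_nonneg (by positivity) (hav₁nn R))
    have h4 : av₁ R * av₂ R ≤ T k := not_lt.1 hRfail
    calc av₁ Q * av₂ Q ≤ (2^n * av₁ R) * (2^n * av₂ R) := h3
    _ = ((2:ℝ)^n * (2:ℝ)^n) * (av₁ R * av₂ R) := by ring
    _ ≤ ((2:ℝ)^n * (2:ℝ)^n) * T k := by
        refine mul_le_mul_of_nonneg_left h4 (by positivity)
  -- a cube cannot be in S k and S k' for k < k'
  have hnot2 : ∀ (k k' : ℤ), k < k' → ∀ Q ∈ S k, Q ∉ S k' := by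
    intro k k' hkk Q hQ hQ'
    have h1 := hQbound k Q hQ
    have h2 := ((hSmem k' Q).1 hQ').2.1
    have h3 : T (k+1) ≤ T k' := hT_mono hkk
    have h4 : ((2:ℝ)^n * (2:ℝ)^n) * T k < T (k+1) := by
      rw [hT_succ k, mul_comm (T k)]
      exact mul_lt_mul_of_pos_right h4n_lt (hT_pos k)
    linarith
  -- same-level cubes are disjoint
  have hdisj_level : ∀ (k : ℤ), ∀ P ∈ S k, ∀ Q ∈ S k, P ≠ Q → P.set ∩ Q.set = ∅ := by
    intro k P hP Q hQ hPQ
    obtain ⟨hP𝒟, hPp, hPmax⟩ := (hSmem k P).1 hP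
    obtain ⟨hQ𝒟, hQp, hQmax⟩ := (hSmem k Q).1 hQ
    rcases h𝒟.2.2.2 P hP𝒟 Q hQ𝒟 with h | h | h
    · exact h
    · exact absurd (hPmax Q hQ𝒟 hQp h) (Ne.symm hPQ)
    · exact absurd (hQmax P hP𝒟 hPp h) hPQ
  -- existence of maximal cubes
  have hmax_exists : ∀ (k : ℤ), ∀ Q₀ ∈ 𝒟, T k < av₁ Q₀ * av₂ Q₀ →
      ∃ P ∈ S k, Q₀.set ⊆ P.set := by
    intro k Q₀ hQ₀𝒟 hQ₀p
    obtain ⟨j₀, hj₀⟩ := h𝒟.2.1 Q₀ hQ₀𝒟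
    set Pred : ℤ → Prop := fun j => ∃ R ∈ 𝒟, R.side = 2 ^ j ∧ Q₀.set ⊆ R.set ∧
      T k < av₁ R * av₂ R with hPreddef
    have hinh : Pred j₀ := ⟨Q₀, hQ₀𝒟, hj₀, subset_rfl, hQ₀p⟩
    set δ : ℝ := min 1 (T k) with hδdef
    have hδ0 : 0 < δ := lt_min one_pos (hT_pos k)
    have hδ1 : δ ≤ 1 := min_le_left _ _
    set V : ℝ := max (Φ₁ (C₁ / δ) * (volume (tsupport f)).toReal)
      (Φ₂ (C₂ / δ) * (volume (tsupport g)).toReal) with hVdef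
    obtain ⟨m, hm⟩ := exists_nat_gt (max V 1)
    have hbdd : ∀ j : ℤ, Pred j → j ≤ (m : ℤ) := by
      intro j hj
      by_contra hcon
      push_neg at hcon
      obtain ⟨R, hR𝒟, hRs, hRsub, hRp⟩ := hj
      have h2j : (max V 1) < (2:ℝ) ^ (j:ℤ) := by
        have h1 : (max V 1) < (m:ℝ) := hm
        have h2 : (m:ℝ) ≤ (2:ℝ)^(m:ℕ) := by
          exact_mod_cast Nat.lt_two_pow_self.le
        have h3 : ((2:ℝ)^(m:ℕ)) = (2:ℝ)^((m:ℕ):ℤ) := (zpow_natCast 2 m).symm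
        have h4 : (2:ℝ)^((m:ℕ):ℤ) ≤ (2:ℝ)^(j:ℤ) := zpow_le_zpow_right₀ one_le_two hcon.le
        linarith
      have hRvol : (2:ℝ)^(j:ℤ) ≤ R.vol := by
        rw [Cube.vol, hRs]
        have h1 : (1:ℝ) ≤ (2:ℝ)^(j:ℤ) := by linarith [le_max_right V 1]
        calc (2:ℝ)^(j:ℤ) = ((2:ℝ)^(j:ℤ))^1 := (pow_one _).symm
        _ ≤ ((2:ℝ)^(j:ℤ))^n := pow_le_pow_right₀ h1 hn
      have hVvol : V ≤ R.vol :=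
        ((le_max_left V 1).trans_lt (h2j.trans_le hRvol)).le
      have ha1 : av₁ R ≤ δ := orliczAvg_le_of_big hP₁ hF₁ R hδ0
        ((le_max_left _ _).trans hVvol)
      have ha2 : av₂ R ≤ δ := orliczAvg_le_of_big hP₂ hF₂ R hδ0
        ((le_max_right _ _).trans hVvol)
      have hprod : av₁ R * av₂ R ≤ δ * δ :=
        mul_le_mul ha1 ha2 (hav₂nn R) hδ0.le
      have hδδ : δ * δ ≤ T k := by
        calc δ * δ ≤ 1 * δ := mul_le_mul_of_nonneg_right hδ1 hδ0.le
        _ = δ := one_mul δ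
        _ ≤ T k := min_le_right _ _
      linarith
    obtain ⟨J, hJ, hJmax⟩ := Int.exists_greatest_of_bdd ⟨(m:ℤ), hbdd⟩ ⟨j₀, hinh⟩
    obtain ⟨P, hP𝒟, hPs, hPsub, hPp⟩ := hJ
    refine ⟨P, (hSmem k P).2 ⟨hP𝒟, hPp, ?_⟩, hPsub⟩
    intro R hR𝒟 hRp hPR
    obtain ⟨m', hm'⟩ := h𝒟.2.1 R hR𝒟
    have hm'J : m' ≤ J := hJmax m' ⟨R, hR𝒟, hm', hPsub.trans hPR, hRp⟩
    have hside : R.side ≤ P.side := by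
      rw [hm', hPs]; exact zpow_le_zpow_right₀ one_le_two hm'J
    exact Cube.subset_rigid hn hPR hside
  -- every P ∈ S (k+1) intersecting Q ∈ S k is contained in Q
  have hsub : ∀ (k : ℤ), ∀ Q ∈ S k, ∀ P ∈ S (k + 1), (P.set ∩ Q.set).Nonempty →
      P.set ⊆ Q.set := by
    intro k Q hQ P hP hne
    obtain ⟨hQ𝒟, hQp, hQmax⟩ := (hSmem k Q).1 hQ
    obtain ⟨hP𝒟, hPp, hPmax⟩ := (hSmem (k+1) P).1 hP
    obtain ⟨x, hxP, hxQ⟩ := hne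
    rcases grid_nested h𝒟 hP𝒟 hQ𝒟 hxP hxQ with h | h
    · exact h
    · exfalso
      have hPk : T k < av₁ P * av₂ P := lt_of_le_of_lt (hT_mono (by omega)) hPp
      have := hQmax P hP𝒟 hPk h
      rw [this] at hP
      exact hnot2 k (k+1) (by omega) Q hQ hP
  -- the main measure estimate
  have main : ∀ (k : ℤ), ∀ Q ∈ S k,
      volume (Q.set ∩ ⋃ P ∈ S (k + 1), Cube.set P) ≤ ENNReal.ofReal Q.vol / 2 := by
    intro k Q hQ
    obtain ⟨hQ𝒟, hQp, hQmax⟩ := (hSmem k Q).1 hQ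
    obtain ⟨Qh, hQh𝒟, hQhsub, hQhside, hQhvol⟩ := hparent Q hQ𝒟
    have hQhfail : av₁ Qh * av₂ Qh ≤ T k := by
      by_contra hcon
      push_neg at hcon
      have := hQmax Qh hQh𝒟 hcon hQhsub
      rw [this] at hQhside
      exact lt_irrefl _ hQhside
    set A := av₁ Qh with hA
    set B := av₂ Qh with hB
    have hsubQ : ∀ P ∈ S (k+1), (P.set ∩ Q.set).Nonempty → P.set ⊆ Q.set :=
      fun P hP hne => hsub k Q hQ P hP hne
    by_cases hAB : 0 < A ∧ 0 < B
    · obtain ⟨hA0, hB0⟩ := hAB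
      set 𝒞₁ : Set (Cube n) := {P | P ∈ S (k+1) ∧ P.set ⊆ Q.set ∧ c₀ * A < av₁ P} with h𝒞₁
      set 𝒞₂ : Set (Cube n) := {P | P ∈ S (k+1) ∧ P.set ⊆ Q.set ∧ c₀ * B < av₂ P} with h𝒞₂
      have hcover : Q.set ∩ ⋃ P ∈ S (k + 1), Cube.set P ⊆
          (⋃ P ∈ 𝒞₁, Cube.set P) ∪ ⋃ P ∈ 𝒞₂, Cube.set P := by
        rintro x ⟨hxQ, hxU⟩
        rw [Set.mem_iUnion₂] at hxU
        obtain ⟨P, hP, hxP⟩ := hxU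
        have hPQ : P.set ⊆ Q.set := hsubQ P hP ⟨x, hxP, hxQ⟩
        have hPp := ((hSmem (k+1) P).1 hP).2.1
        have hone : c₀ * A < av₁ P ∨ c₀ * B < av₂ P := by
          by_contra hcon
          push_neg at hcon
          have h1 : av₁ P * av₂ P ≤ (c₀ * A) * (c₀ * B) :=
            mul_le_mul hcon.1 hcon.2 (hav₂nn P) (by positivity)
          have h2 : (c₀*A)*(c₀*B) ≤ (c₀*c₀) * T k := by
            calc (c₀*A)*(c₀*B) = (c₀*c₀)*(A*B) := by ring
            _ ≤ (c₀*c₀)*T k := mul_le_mul_of_nonneg_left hQhfail (by positivity)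
          rw [hT_succ k, mul_comm (T k)] at hPp
          linarith
        rcases hone with h | h
        · exact Or.inl (Set.mem_biUnion ⟨hP, hPQ, h⟩ hxP)
        · exact Or.inr (Set.mem_biUnion ⟨hP, hPQ, h⟩ hxP)
      have keyclass : ∀ (Φ : ℝ → ℝ) (hPhi : PhiData Φ) (F : Euc n → ℝ) (CF : ℝ)
          (hFD : FData F CF) (A' : ℝ) (hA' : 0 < A') (hA'avg : A' = orliczAvg Φ Qh F)
          (𝒞 : Set (Cube n)) (h𝒞 : ∀ P ∈ 𝒞, P ∈ S (k+1) ∧ P.set ⊆ Q.set ∧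
            c₀ * A' < orliczAvg Φ P F),
          volume (⋃ P ∈ 𝒞, Cube.set P) ≤ ENNReal.ofReal Q.vol / 4 := by
        intro Φ hPhi F CF hFD A' hA' hA'avg 𝒞 h𝒞
        have hcnt : 𝒞.Countable :=
          h𝒟.1.mono (fun P hP => ((hSmem (k+1) P).1 (h𝒞 P hP).1).1)
        have := hcnt.to_subtype
        set c₁ := c₀ * A' with hc₁
        have hc₁0 : 0 < c₁ := by positivity
        have hh₀nn : ∀ x : Euc n, 0 ≤ Φ (|F x| / c₁) :=
          fun x => hPhi.nonneg _ (div_nonneg (abs_nonneg _) hc₁0.le)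
        have hdisj : Pairwise (Function.onFun Disjoint fun P : 𝒞 => (P : Cube n).set) := by
          intro i j hij
          have hne : (i : Cube n) ≠ (j : Cube n) := Subtype.coe_injective.ne hij
          exact Set.disjoint_iff_inter_eq_empty.2
            (hdisj_level (k+1) _ (h𝒞 _ i.2).1 _ (h𝒞 _ j.2).1 hne)
        have hsubU : (⋃ P : 𝒞, (P : Cube n).set) ⊆ Q.set :=
          Set.iUnion_subset fun i => (h𝒞 _ i.2).2.1
        have havgQh : 0 < orliczAvg Φ Qh F := by rw [← hA'avg]; exact hA'
        have step3 : (∫ x in Qh.set, Φ (|F x| / A')) ≤ Qh.vol := by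
          have := oInt_avg_le hPhi hFD Qh havgQh
          rwa [← hA'avg] at this
        have step2 : (∫ x in Q.set, Φ (|F x| / A')) ≤ (∫ x in Qh.set, Φ (|F x| / A')) :=
          setIntegral_mono_set (oInt_integrableOn hPhi hFD Qh hA')
            (Filter.Eventually.of_forall fun x =>
              hPhi.nonneg _ (div_nonneg (abs_nonneg _) hA'.le))
            (HasSubset.Subset.eventuallyLE hQhsub)
        have ptwise : ∀ x : Euc n, Φ (|F x| / c₁) ≤ Φ (|F x| / A') / c₀ := by
          intro x
          have heq : |F x| / c₁ = (|F x| / A') / c₀ := by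
            rw [hc₁, div_div, mul_comm c₀ A']
          rw [heq]
          exact hPhi.scale _ _ (div_nonneg (abs_nonneg _) hA'.le) hc₀1
        have step1a : (∫ x in Q.set, Φ (|F x| / c₁)) ≤ (∫ x in Q.set, Φ (|F x| / A') / c₀) :=
          integral_mono (oInt_integrableOn hPhi hFD Q hc₁0)
            ((oInt_integrableOn hPhi hFD Q hA').div_const c₀) ptwise
        have step1 : (∫ x in Q.set, Φ (|F x| / c₁)) ≤ (∫ x in Q.set, Φ (|F x| / A')) / c₀ :=
          step1a.trans_eq (integral_div _ _)
        have hc₀Q : Qh.vol / c₀ = Q.vol / 4 := by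
          rw [hQhvol, hc₀def, pow_add, show (2:ℝ)^2 = 4 by norm_num,
            mul_div_mul_left _ _ (by positivity : ((2:ℝ)^n) ≠ 0)]
        calc volume (⋃ P ∈ 𝒞, Cube.set P)
            = volume (⋃ P : 𝒞, (P : Cube n).set) := by rw [Set.biUnion_eq_iUnion]
        _ ≤ ∑' P : 𝒞, volume (P : Cube n).set := measure_iUnion_le _
        _ ≤ ∑' P : 𝒞, ∫⁻ x in (P : Cube n).set, ENNReal.ofReal (Φ (|F x| / c₁)) := by
            refine ENNReal.tsum_le_tsum fun P => ?_
            have hv : (P : Cube n).vol < ∫ x in (P : Cube n).set, Φ (|F x| / c₁) :=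
              vol_lt_oInt hPhi hFD _ hc₁0 (h𝒞 _ P.2).2.2
            rw [Cube.volume_set]
            calc ENNReal.ofReal (P : Cube n).vol
                ≤ ENNReal.ofReal (∫ x in (P : Cube n).set, Φ (|F x| / c₁)) :=
                  ENNReal.ofReal_le_ofReal hv.le
            _ = ∫⁻ x in (P : Cube n).set, ENNReal.ofReal (Φ (|F x| / c₁)) :=
                  ofReal_integral_eq_lintegral_ofReal (oInt_integrableOn hPhi hFD _ hc₁0)
                    (Filter.Eventually.of_forall fun x => hh₀nn x)
        _ = ∫⁻ x in ⋃ P : 𝒞, (P : Cube n).set, ENNReal.ofReal (Φ (|F x| / c₁)) :=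
            (lintegral_iUnion (fun P => Cube.measurableSet_set _) hdisj _).symm
        _ ≤ ∫⁻ x in Q.set, ENNReal.ofReal (Φ (|F x| / c₁)) := lintegral_mono_set hsubU
        _ = ENNReal.ofReal (∫ x in Q.set, Φ (|F x| / c₁)) :=
            (ofReal_integral_eq_lintegral_ofReal (oInt_integrableOn hPhi hFD Q hc₁0)
              (Filter.Eventually.of_forall fun x => hh₀nn x)).symm
        _ ≤ ENNReal.ofReal (Q.vol / 4) := by
            refine ENNReal.ofReal_le_ofReal ?_
            calc (∫ x in Q.set, Φ (|F x| / c₁)) ≤ (∫ x in Q.set, Φ (|F x| / A')) / c₀ := step1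
            _ ≤ Qh.vol / c₀ := (div_le_div_iff_of_pos_right hc₀0).2 (step2.trans step3)
            _ = Q.vol / 4 := hc₀Q
        _ = ENNReal.ofReal Q.vol / 4 := by
            rw [ENNReal.ofReal_div_of_pos (by norm_num : (0:ℝ) < 4)]
            norm_num
      have hb₁ : volume (⋃ P ∈ 𝒞₁, Cube.set P) ≤ ENNReal.ofReal Q.vol / 4 :=
        keyclass Φ₁ hP₁ f C₁ hF₁ A hA0 rfl 𝒞₁ (fun P hP => hP)
      have hb₂ : volume (⋃ P ∈ 𝒞₂, Cube.set P) ≤ ENNReal.ofReal Q.vol / 4 :=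
        keyclass Φ₂ hP₂ g C₂ hF₂ B hB0 rfl 𝒞₂ (fun P hP => hP)
      calc volume (Q.set ∩ ⋃ P ∈ S (k + 1), Cube.set P)
          ≤ volume ((⋃ P ∈ 𝒞₁, Cube.set P) ∪ ⋃ P ∈ 𝒞₂, Cube.set P) := measure_mono hcover
      _ ≤ volume (⋃ P ∈ 𝒞₁, Cube.set P) + volume (⋃ P ∈ 𝒞₂, Cube.set P) :=
          measure_union_le _ _
      _ ≤ ENNReal.ofReal Q.vol / 4 + ENNReal.ofReal Q.vol / 4 := add_le_add hb₁ hb₂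
      _ = ENNReal.ofReal Q.vol / 2 := by
          rw [ENNReal.div_add_div_same, ← two_mul,
            show (4:ℝ≥0∞) = 2 * 2 by norm_num,
            ENNReal.mul_div_mul_left _ _ two_ne_zero ENNReal.ofNat_ne_top]
    · have hempty : Q.set ∩ ⋃ P ∈ S (k + 1), Cube.set P = ∅ := by
        rw [Set.eq_empty_iff_forall_notMem]
        rintro x ⟨hxQ, hxU⟩
        rw [Set.mem_iUnion₂] at hxU
        obtain ⟨P, hP, hxP⟩ := hxU
        have hPsub : P.set ⊆ Qh.set := (hsubQ P hP ⟨x, hxP, hxQ⟩).trans hQhsub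
        have hPp := ((hSmem (k+1) P).1 hP).2.1
        have hzero : av₁ P * av₂ P ≤ 0 := by
          rcases not_and_or.1 hAB with h | h
          · have hA0 : A = 0 := le_antisymm (not_lt.1 h) (hav₁nn Qh)
            have h1 : av₁ P ≤ (Qh.vol / P.vol) * A := orliczAvg_le_of_subset hn hP₁ hF₁ hPsub
            have h2 : av₁ P = 0 := le_antisymm (by rw [hA0, mul_zero] at h1; exact h1)
              (hav₁nn P)
            rw [h2, zero_mul]
          · have hB0 : B = 0 := le_antisymm (not_lt.1 h) (hav₂nn Qh)
            have h1 : av₂ P ≤ (Qh.vol / P.vol) * B := orliczAvg_le_of_subset hn hP₂ hF₂ hPsub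
            have h2 : av₂ P = 0 := le_antisymm (by rw [hB0, mul_zero] at h1; exact h1)
              (hav₂nn P)
            rw [h2, mul_zero]
        exact absurd hPp (not_lt.2 (hzero.trans (hT_pos _).le))
      rw [hempty, measure_empty]
      exact bot_le
  -- measurability of unions
  have hUmeas : ∀ k : ℤ, MeasurableSet (⋃ P ∈ S (k + 1), Cube.set P) :=
    fun k => MeasurableSet.biUnion (h𝒟.1.mono fun P hP => ((hSmem _ P).1 hP).1)
      fun P _ => P.measurableSet_set
  -- part 3
  have part3 : ∀ (k : ℤ), ∀ Q ∈ S k,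
      ENNReal.ofReal Q.vol ≤ 2 * volume (Q.set \ ⋃ P ∈ S (k + 1), Cube.set P) := by
    intro k Q hQ
    set U := ⋃ P ∈ S (k + 1), Cube.set P
    set x := ENNReal.ofReal Q.vol with hx
    have hsplit : volume (Q.set ∩ U) + volume (Q.set \ U) = volume Q.set :=
      measure_inter_add_diff Q.set (hUmeas k)
    have hvol : volume Q.set = x := Q.volume_set
    have h2 : x/2 + x/2 ≤ x/2 + volume (Q.set \ U) := by
      calc x/2 + x/2 = x := ENNReal.add_halves x
      _ = volume (Q.set ∩ U) + volume (Q.set \ U) := by rw [← hvol, hsplit]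
      _ ≤ x/2 + volume (Q.set \ U) := add_le_add_left (main k Q hQ) _
    have h3 : x/2 ≤ volume (Q.set \ U) :=
      (ENNReal.add_le_add_iff_left
        ((ENNReal.div_lt_top ENNReal.ofReal_ne_top two_ne_zero).ne)).1 h2
    calc x = x/2 + x/2 := (ENNReal.add_halves x).symm
    _ ≤ volume (Q.set \ U) + volume (Q.set \ U) := add_le_add h3 h3
    _ = 2 * volume (Q.set \ U) := (two_mul _).symm
  -- part 2
  have part2 : ∀ k k' : ℤ, ∀ Q ∈ S k, ∀ Q' ∈ S k', (k, Q) ≠ (k', Q') →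
      Disjoint (Q.set \ ⋃ P ∈ S (k + 1), Cube.set P)
        (Q'.set \ ⋃ P ∈ S (k' + 1), Cube.set P) := by
    have key : ∀ k k' : ℤ, k < k' → ∀ Q : Cube n, ∀ Q' ∈ S k',
        Disjoint (Q.set \ ⋃ P ∈ S (k + 1), Cube.set P)
          (Q'.set \ ⋃ P ∈ S (k' + 1), Cube.set P) := by
      intro k k' hkk Q Q' hQ'
      have hQ'p := ((hSmem k' Q').1 hQ').2.1
      have hQ'𝒟 := ((hSmem k' Q').1 hQ').1
      obtain ⟨P, hP, hPsub⟩ := hmax_exists (k+1) Q' hQ'𝒟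
        (lt_of_le_of_lt (hT_mono (by omega)) hQ'p)
      have h1 : Q'.set ⊆ ⋃ P ∈ S (k + 1), Cube.set P :=
        hPsub.trans (Set.subset_biUnion_of_mem hP)
      refine Disjoint.mono_right ((Set.diff_subset).trans h1) ?_
      exact Set.disjoint_sdiff_left
    intro k k' Q hQ Q' hQ' hne
    rcases lt_trichotomy k k' with h | h | h
    · exact key k k' h Q Q' hQ'
    · subst h
      have hQQ' : Q ≠ Q' := fun hEq => hne (by rw [hEq])
      have hd := hdisj_level k Q hQ Q' hQ' hQQ'
      refine Disjoint.mono (Set.diff_subset) (Set.diff_subset) ?_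
      exact Set.disjoint_iff_inter_eq_empty.2 hd
    · exact (key k' k h Q' Q hQ).symm
  refine ⟨main, part2, part3, ?_⟩
  -- sparseness
  set E : Cube n → Set (Euc n) := fun Q =>
    if h : ∃ k, Q ∈ S k then Q.set \ ⋃ P ∈ S (h.choose + 1), Cube.set P else ∅ with hEdef
  refine ⟨E, ?_, ?_⟩
  · intro Q hQ
    obtain hex : ∃ k, Q ∈ S k := Set.mem_iUnion.1 hQ
    rw [hEdef]
    simp only [dif_pos hex]
    exact ⟨Set.diff_subset, part3 hex.choose Q hex.choose_spec⟩
  · intro Q hQ Q' hQ' hQQ'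
    obtain hex : ∃ k, Q ∈ S k := Set.mem_iUnion.1 hQ
    obtain hex' : ∃ k, Q' ∈ S k := Set.mem_iUnion.1 hQ'
    rw [hEdef]
    simp only [dif_pos hex, dif_pos hex']
    refine part2 hex.choose hex'.choose Q hex.choose_spec Q' hex'.choose_spec ?_
    intro hEq
    exact hQQ' (congrArg Prod.snd hEq)

end
end
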